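/- arXiv:2201.02090 — 7 statements merged into one kernel-verified Lean document; each statement's English description precedes it below -/
import Mathlib

section
/- Let τ₁ > 0. Then τ_s(θ) = τ₁ for all θ ∈ [0, π) if and only if the following three conditions hold: det(M(τ)) > 0 for all τ ∈ (0, τ₁); the set {τ > 0 : det(M(τ)) = 0} has a minimum and this minimum equals τ₁; and M(τ₁) is the zero matrix. -/
open Matrix Real

lemma quadEval (A : Matrix (Fin 2) (Fin 2) ℝ) (x y : ℝ) :
    ![x, y] ⬝ᵥ A.mulVec ![x, y] =
      A 0 0 * x ^ 2 + (A 0 1 + A 1 0) * (x * y) + A 1 1 * y ^ 2 := by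
  simp [dotProduct, Matrix.mulVec, Fin.sum_univ_two]
  ring

/-- If a binary quadratic form has nonpositive discriminant-type determinant,
it vanishes at some unit direction `θ ∈ [0, π)`. -/
lemma exists_root_of_det_nonpos (a b c : ℝ) (hdet : a * c - b * b ≤ 0) :
    ∃ θ ∈ Set.Ico 0 π,
      a * Real.cos θ ^ 2 + (b + b) * (Real.cos θ * Real.sin θ)
        + c * Real.sin θ ^ 2 = 0 := by
  by_cases hc0 : c = 0
  · refine ⟨π / 2, ⟨by positivity, by linarith [Real.pi_pos]⟩, ?_⟩
    rw [Real.cos_pi_div_two, Real.sin_pi_div_two]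
    simp [hc0]
  · -- root of c t² + 2 b t + a
    obtain ⟨t, hroot⟩ : ∃ t : ℝ, c * t ^ 2 + 2 * b * t + a = 0 := by
      have hsq : Real.sqrt (b * b - a * c) ^ 2 = b * b - a * c :=
        Real.sq_sqrt (by linarith)
      set s : ℝ := Real.sqrt (b * b - a * c)
      refine ⟨(-b + s) / c, ?_⟩
      have ecd : c * ((-b + s) / c) = -b + s := by field_simp
      have h1 : c * (c * ((-b + s) / c) ^ 2 + 2 * b * ((-b + s) / c) + a) = c * 0 := by
        rw [mul_zero]
        linear_combination (c * ((-b + s) / c) + b + s) * ecd + hsq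
      exact mul_left_cancel₀ hc0 h1
    have hune : Real.sqrt (1 + t ^ 2) ≠ 0 := by positivity
    have hval : ∀ θ : ℝ, Real.cos θ = 1 / Real.sqrt (1 + t ^ 2) →
        Real.sin θ = t / Real.sqrt (1 + t ^ 2) →
        a * Real.cos θ ^ 2 + (b + b) * (Real.cos θ * Real.sin θ)
          + c * Real.sin θ ^ 2 = 0 := by
      intro θ hcos hsin
      rw [hcos, hsin]
      have heq : a * (1 / Real.sqrt (1 + t ^ 2)) ^ 2
          + (b + b) * (1 / Real.sqrt (1 + t ^ 2) * (t / Real.sqrt (1 + t ^ 2)))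
          + c * (t / Real.sqrt (1 + t ^ 2)) ^ 2
          = (c * t ^ 2 + 2 * b * t + a) / Real.sqrt (1 + t ^ 2) ^ 2 := by
        field_simp
        ring
      rw [heq, hroot, zero_div]
    have hvalneg : ∀ θ : ℝ, Real.cos θ = -(1 / Real.sqrt (1 + t ^ 2)) →
        Real.sin θ = -(t / Real.sqrt (1 + t ^ 2)) →
        a * Real.cos θ ^ 2 + (b + b) * (Real.cos θ * Real.sin θ)
          + c * Real.sin θ ^ 2 = 0 := by
      intro θ hcos hsin
      rw [hcos, hsin]
      have heq : a * (-(1 / Real.sqrt (1 + t ^ 2))) ^ 2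
          + (b + b) * (-(1 / Real.sqrt (1 + t ^ 2)) * -(t / Real.sqrt (1 + t ^ 2)))
          + c * (-(t / Real.sqrt (1 + t ^ 2))) ^ 2
          = (c * t ^ 2 + 2 * b * t + a) / Real.sqrt (1 + t ^ 2) ^ 2 := by
        field_simp
        ring
      rw [heq, hroot, zero_div]
    have hcos : Real.cos (Real.arctan t) = 1 / Real.sqrt (1 + t ^ 2) :=
      Real.cos_arctan t
    have hsin : Real.sin (Real.arctan t) = t / Real.sqrt (1 + t ^ 2) :=
      Real.sin_arctan t
    have harc := Real.arctan_mem_Ioo t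
    rcases le_or_gt 0 (Real.arctan t) with h0 | h0
    · exact ⟨Real.arctan t, ⟨h0, lt_trans harc.2 (by linarith [Real.pi_pos])⟩,
        hval _ hcos hsin⟩
    · refine ⟨Real.arctan t + π, ⟨by linarith [harc.1], by linarith [harc.2]⟩, ?_⟩
      exact hvalneg _ (by rw [Real.cos_add_pi, hcos]) (by rw [Real.sin_add_pi, hsin])

/-- A binary quadratic form with positive determinant is definite:
it cannot vanish on a unit vector. -/
lemma definite_of_det_pos (a b c x y : ℝ) (hdet : 0 < a * c - b * b)
    (hpyth : y ^ 2 + x ^ 2 = 1)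
    (h : a * x ^ 2 + (b + b) * (x * y) + c * y ^ 2 = 0) : False := by
  have key : (a * x + b * y) ^ 2 + (b * x + c * y) ^ 2 + (a * c - b * b) = 0 := by
    linear_combination (a + c) * h - (a * c - b * b) * hpyth
  nlinarith [sq_nonneg (a * x + b * y), sq_nonneg (b * x + c * y)]

/-- The inter-event time function `τ_s` is identically `τ₁` on `[0, π)`
iff `det (M τ) > 0` on `(0, τ₁)`, `τ₁` is the minimum of `{τ > 0 : det (M τ) = 0}`, and
`M τ₁` is the zero matrix. Here `τ_s θ` is the minimum of
`{τ > 0 : x_θᵀ M(τ) x_θ = 0}`, assumed to exist for every `θ`. -/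
theorem periodic_triggering_iff (M : ℝ → Matrix (Fin 2) (Fin 2) ℝ)
    (hsymm : ∀ τ, (M τ).IsSymm)
    (τs : ℝ → ℝ)
    (hτs : ∀ θ : ℝ, IsLeast
      {τ : ℝ | 0 < τ ∧
        ![Real.cos θ, Real.sin θ] ⬝ᵥ (M τ).mulVec ![Real.cos θ, Real.sin θ] = 0} (τs θ))
    (τ₁ : ℝ) (hτ₁ : 0 < τ₁) :
    (∀ θ ∈ Set.Ico 0 π, τs θ = τ₁) ↔
      ((∀ τ ∈ Set.Ioo 0 τ₁, 0 < (M τ).det) ∧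
       IsLeast {τ : ℝ | 0 < τ ∧ (M τ).det = 0} τ₁ ∧
       M τ₁ = 0) := by
  constructor
  · intro h
    have hdetpos : ∀ τ ∈ Set.Ioo 0 τ₁, 0 < (M τ).det := by
      intro τ hτ
      by_contra hle
      push_neg at hle
      rw [Matrix.det_fin_two, (hsymm τ).apply 0 1] at hle
      obtain ⟨θ, hθmem, hθ⟩ := exists_root_of_det_nonpos (M τ 0 0) (M τ 0 1) (M τ 1 1)
        (by linarith)
      have hθ' : ![Real.cos θ, Real.sin θ] ⬝ᵥ (M τ).mulVec ![Real.cos θ, Real.sin θ] = 0 := by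
        rw [quadEval, (hsymm τ).apply 0 1]
        exact hθ
      have hlb := (hτs θ).2 ⟨hτ.1, hθ'⟩
      rw [h θ hθmem] at hlb
      linarith [hτ.2]
    have hMzero : M τ₁ = 0 := by
      have hmem : ∀ θ ∈ Set.Ico 0 π,
          M τ₁ 0 0 * Real.cos θ ^ 2 + (M τ₁ 0 1 + M τ₁ 1 0) * (Real.cos θ * Real.sin θ)
            + M τ₁ 1 1 * Real.sin θ ^ 2 = 0 := by
        intro θ hθ
        have h1 := (hτs θ).1
        rw [h θ hθ] at h1
        rw [← quadEval]
        exact h1.2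
      have hpi := Real.pi_pos
      have h0 := hmem 0 ⟨le_refl 0, hpi⟩
      have h2 := hmem (π / 2) ⟨by positivity, by linarith⟩
      have h4 := hmem (π / 4) ⟨by positivity, by linarith⟩
      rw [Real.cos_zero, Real.sin_zero] at h0
      rw [Real.cos_pi_div_two, Real.sin_pi_div_two] at h2
      rw [Real.cos_pi_div_four, Real.sin_pi_div_four] at h4
      simp only [one_pow, mul_one, mul_zero, zero_pow, zero_mul, add_zero, zero_add,
        ne_eq, OfNat.ofNat_ne_zero, not_false_eq_true] at h0 h2
      have hba := (hsymm τ₁).apply 0 1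
      have hsqrt2 : Real.sqrt 2 ^ 2 = 2 := Real.sq_sqrt (by norm_num)
      have hb0 : M τ₁ 0 1 = 0 := by nlinarith [h4, h0, h2, hba, hsqrt2]
      have hb0' : M τ₁ 1 0 = 0 := hba.trans hb0
      ext i j
      fin_cases i <;> fin_cases j <;> simp only [Matrix.zero_apply] <;>
        first
          | exact h0
          | exact h2
          | exact hb0
          | exact hb0'
    refine ⟨hdetpos, ⟨⟨hτ₁, by rw [hMzero]; simp⟩, ?_⟩, hMzero⟩
    intro τ hτmem
    by_contra hlt
    push_neg at hlt
    have := hdetpos τ ⟨hτmem.1, hlt⟩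
    rw [hτmem.2] at this
    exact lt_irrefl 0 this
  · rintro ⟨hdetpos, _, hMzero⟩
    intro θ _
    refine IsLeast.unique (hτs θ) ⟨⟨hτ₁, by rw [hMzero]; simp⟩, ?_⟩
    intro τ hτmem
    by_contra hlt
    push_neg at hlt
    have hdet := hdetpos τ ⟨hτmem.1, hlt⟩
    rw [Matrix.det_fin_two, (hsymm τ).apply 0 1] at hdet
    have hq := hτmem.2
    rw [quadEval, (hsymm τ).apply 0 1] at hq
    exact definite_of_det_pos (M τ 0 0) (M τ 0 1) (M τ 1 1) (Real.cos θ) (Real.sin θ)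
      (by linarith) (Real.sin_sq_add_cos_sq θ) hq
end

section
/- Suppose Assumption (A1) holds and τ_max := sup_{θ ∈ ℝ} τ_s(θ) < ∞. If ∂f_s/∂τ(θ̄, τ̄) = x_{θ̄}ᵀ M′(τ̄) x_{θ̄} ≠ 0 for every pair (θ̄, τ̄) ∈ ℝ × (0, ∞) with f_s(θ̄, τ̄) = 0, then the inter-event time function τ_s : ℝ → (0, ∞) is continuously differentiable on ℝ. -/
open Matrix Real Filter Set Topology

noncomputable def Fe (M : ℝ → Matrix (Fin 2) (Fin 2) ℝ) (p : ℝ × ℝ) : ℝ :=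
  Real.cos p.1 * Real.cos p.1 * M p.2 0 0 + Real.cos p.1 * Real.sin p.1 * M p.2 0 1
    + Real.sin p.1 * Real.cos p.1 * M p.2 1 0 + Real.sin p.1 * Real.sin p.1 * M p.2 1 1

noncomputable def De (M : ℝ → Matrix (Fin 2) (Fin 2) ℝ) (p : ℝ × ℝ) : ℝ :=
  Real.cos p.1 * Real.cos p.1 * deriv (fun t => M t 0 0) p.2
    + Real.cos p.1 * Real.sin p.1 * deriv (fun t => M t 0 1) p.2
    + Real.sin p.1 * Real.cos p.1 * deriv (fun t => M t 1 0) p.2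
    + Real.sin p.1 * Real.sin p.1 * deriv (fun t => M t 1 1) p.2

lemma Fe_eq (M : ℝ → Matrix (Fin 2) (Fin 2) ℝ) (θ τ : ℝ) :
    ![Real.cos θ, Real.sin θ] ⬝ᵥ (M τ).mulVec ![Real.cos θ, Real.sin θ] = Fe M (θ, τ) := by
  simp [Fe, dotProduct, Matrix.mulVec, Fin.sum_univ_two]
  ring

lemma vec_ne_zero (θ : ℝ) : ![Real.cos θ, Real.sin θ] ≠ 0 := by
  intro h
  have h0 : Real.cos θ = 0 := congrFun h 0
  have h1 : Real.sin θ = 0 := congrFun h 1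
  have h2 := Real.sin_sq_add_cos_sq θ
  rw [h0, h1] at h2; norm_num at h2

variable {M : ℝ → Matrix (Fin 2) (Fin 2) ℝ}

lemma Fe_contDiffAt (hanal : ∀ i j, AnalyticOnNhd ℝ (fun τ => M τ i j) (Set.Ici 0))
    (p : ℝ × ℝ) (hp : 0 ≤ p.2) : ContDiffAt ℝ 1 (Fe M) p := by
  have h : ∀ i j, ContDiffAt ℝ 1 (fun q : ℝ × ℝ => M q.2 i j) p :=
    fun i j => ((hanal i j p.2 hp).contDiffAt).comp p contDiffAt_snd
  have hc : ContDiffAt ℝ 1 (fun q : ℝ × ℝ => Real.cos q.1) p :=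
    (Real.contDiff_cos.contDiffAt).comp p contDiffAt_fst
  have hs : ContDiffAt ℝ 1 (fun q : ℝ × ℝ => Real.sin q.1) p :=
    (Real.contDiff_sin.contDiffAt).comp p contDiffAt_fst
  exact ((((hc.mul hc).mul (h 0 0)).add ((hc.mul hs).mul (h 0 1))).add
    ((hs.mul hc).mul (h 1 0))).add ((hs.mul hs).mul (h 1 1))

lemma Fe_hasDerivAt (hanal : ∀ i j, AnalyticOnNhd ℝ (fun τ => M τ i j) (Set.Ici 0))
    (θ τ : ℝ) (hτ : 0 ≤ τ) : HasDerivAt (fun t => Fe M (θ, t)) (De M (θ, τ)) τ := by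
  have h : ∀ i j, HasDerivAt (fun t => M t i j) (deriv (fun t => M t i j) τ) τ :=
    fun i j => ((hanal i j τ hτ).differentiableAt).hasDerivAt
  exact
    ((((h 0 0).const_mul (Real.cos θ * Real.cos θ)).add
      ((h 0 1).const_mul (Real.cos θ * Real.sin θ))).add
      ((h 1 0).const_mul (Real.sin θ * Real.cos θ))).add
      ((h 1 1).const_mul (Real.sin θ * Real.sin θ))

lemma De_continuousAt (hanal : ∀ i j, AnalyticOnNhd ℝ (fun τ => M τ i j) (Set.Ici 0))
    (p : ℝ × ℝ) (hp : 0 ≤ p.2) : ContinuousAt (De M) p := by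
  have h : ∀ i j, ContinuousAt (fun q : ℝ × ℝ => deriv (fun t => M t i j) q.2) p := by
    intro i j
    have h1 : ContinuousAt (fderiv ℝ (fun t => M t i j)) p.2 :=
      ((hanal i j p.2 hp).fderiv).continuousAt
    have h2 : ContinuousAt (fun y => fderiv ℝ (fun t => M t i j) y 1) p.2 :=
      ((ContinuousLinearMap.apply ℝ ℝ (1 : ℝ)).continuous.continuousAt).comp h1
    have h3 : ContinuousAt (deriv (fun t => M t i j)) p.2 := h2
    exact h3.comp continuous_snd.continuousAt
  have hc : ContinuousAt (fun q : ℝ × ℝ => Real.cos q.1) p :=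
    (Real.continuous_cos.comp continuous_fst).continuousAt
  have hs : ContinuousAt (fun q : ℝ × ℝ => Real.sin q.1) p :=
    (Real.continuous_sin.comp continuous_fst).continuousAt
  exact ((((hc.mul hc).mul (h 0 0)).add ((hc.mul hs).mul (h 0 1))).add
    ((hs.mul hc).mul (h 1 0))).add ((hs.mul hs).mul (h 1 1))

lemma Fe_neg_of_posDef {τm : ℝ} (hnegdef : ∀ τ ∈ Set.Ioo 0 τm, (-(M τ)).PosDef)
    (θ τ : ℝ) (h1 : 0 < τ) (h2 : τ < τm) : Fe M (θ, τ) < 0 := by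
  have hp := (hnegdef τ ⟨h1, h2⟩).dotProduct_mulVec_pos (vec_ne_zero θ)
  rw [show star ![Real.cos θ, Real.sin θ] = ![Real.cos θ, Real.sin θ] by simp] at hp
  rw [Matrix.neg_mulVec, dotProduct_neg, Fe_eq M θ τ] at hp
  linarith

lemma Fe_continuousAt_right (hanal : ∀ i j, AnalyticOnNhd ℝ (fun τ => M τ i j) (Set.Ici 0))
    (θ τ : ℝ) (hτ : 0 ≤ τ) : ContinuousAt (fun t => Fe M (θ, t)) τ :=
  ((Fe_contDiffAt hanal (θ, τ) hτ).continuousAt).comp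
    ((continuous_const.prodMk continuous_id).continuousAt)

lemma Fe_neg_below (hanal : ∀ i j, AnalyticOnNhd ℝ (fun τ => M τ i j) (Set.Ici 0))
    {τm : ℝ} (hτm : 0 < τm) (hnegdef : ∀ τ ∈ Set.Ioo 0 τm, (-(M τ)).PosDef)
    {τs : ℝ → ℝ}
    (hτs : ∀ θ : ℝ, IsLeast
      {τ : ℝ | 0 < τ ∧
        ![Real.cos θ, Real.sin θ] ⬝ᵥ (M τ).mulVec ![Real.cos θ, Real.sin θ] = 0} (τs θ))
    (θ τ : ℝ) (h0 : 0 < τ) (h1 : τ < τs θ) : Fe M (θ, τ) < 0 := by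
  rcases lt_trichotomy (Fe M (θ, τ)) 0 with h | h | h
  · exact h
  · exact absurd ((hτs θ).2 ⟨h0, by rw [Fe_eq]; exact h⟩) (by linarith)
  · exfalso
    set a := min τ τm / 2 with ha
    have ha0 : 0 < a := by have := lt_min h0 hτm; positivity
    have haτ : a < τ := by
      have : min τ τm ≤ τ := min_le_left _ _
      linarith
    have haμ : a < τm := by
      have : min τ τm ≤ τm := min_le_right _ _
      linarith
    have hna : Fe M (θ, a) < 0 := Fe_neg_of_posDef hnegdef θ a ha0 haμ
    have hcont : ContinuousOn (fun t => Fe M (θ, t)) (Set.Icc a τ) := fun t ht =>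
      (Fe_continuousAt_right hanal θ t (le_trans ha0.le ht.1)).continuousWithinAt
    obtain ⟨c, hc, hc0⟩ := intermediate_value_Icc haτ.le hcont ⟨hna.le, h.le⟩
    have hcle := (hτs θ).2 ⟨lt_of_lt_of_le ha0 hc.1, by rw [Fe_eq]; exact hc0⟩
    linarith [hc.2]

/-- Under Assumption (A1) and boundedness of `τ_s`, if
`∂f_s/∂τ (θ̄, τ̄) ≠ 0` at every zero `(θ̄, τ̄)` of `f_s` with `τ̄ > 0`, then the
inter-event time function `τ_s : ℝ → (0, ∞)` is continuously differentiable on `ℝ`. -/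
theorem ts_contDiff_of_deriv_ne_zero (M : ℝ → Matrix (Fin 2) (Fin 2) ℝ)
    (hsymm : ∀ τ, (M τ).IsSymm)
    (hanal : ∀ i j, AnalyticOnNhd ℝ (fun τ => M τ i j) (Set.Ici 0))
    (τm : ℝ) (hτm : IsLeast {τ : ℝ | 0 < τ ∧ (M τ).det = 0} τm)
    (hnegdef : ∀ τ ∈ Set.Ioo 0 τm, (-(M τ)).PosDef)
    (τs : ℝ → ℝ)
    (hτs : ∀ θ : ℝ, IsLeast
      {τ : ℝ | 0 < τ ∧
        ![Real.cos θ, Real.sin θ] ⬝ᵥ (M τ).mulVec ![Real.cos θ, Real.sin θ] = 0} (τs θ))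
    (τmax : ℝ) (hτmax : ∀ θ : ℝ, τs θ ≤ τmax)
    (hderiv : ∀ θb τb : ℝ, 0 < τb →
      ![Real.cos θb, Real.sin θb] ⬝ᵥ (M τb).mulVec ![Real.cos θb, Real.sin θb] = 0 →
      deriv (fun τ => ![Real.cos θb, Real.sin θb] ⬝ᵥ
        (M τ).mulVec ![Real.cos θb, Real.sin θb]) τb ≠ 0) :
    ContDiff ℝ 1 τs := by
  have hτm0 : 0 < τm := hτm.1.1
  rw [contDiff_iff_contDiffAt]
  intro θ₀
  obtain ⟨⟨hτ₀pos, hτ₀zero⟩, hτ₀lb⟩ := hτs θ₀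
  set τ₀ := τs θ₀ with hτ₀def
  have hτ₀Fe : Fe M (θ₀, τ₀) = 0 := by rw [← Fe_eq]; exact hτ₀zero
  -- the partial derivative in τ at (θ₀, τ₀)
  set c := De M (θ₀, τ₀) with hcdef
  have hcz : c ≠ 0 := by
    have hd := hderiv θ₀ τ₀ hτ₀pos hτ₀zero
    have h1 : (fun τ => ![Real.cos θ₀, Real.sin θ₀] ⬝ᵥ
        (M τ).mulVec ![Real.cos θ₀, Real.sin θ₀]) = fun t => Fe M (θ₀, t) :=
      funext fun t => Fe_eq M θ₀ t
    rw [h1, (Fe_hasDerivAt hanal θ₀ τ₀ hτ₀pos.le).deriv] at hd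
    exact hd
  have hcpos : 0 < c := by
    rcases hcz.lt_or_gt with h | h
    · exfalso
      have hco : ContinuousAt (fun t => De M (θ₀, t)) τ₀ :=
        (De_continuousAt hanal (θ₀, τ₀) hτ₀pos.le).comp
          ((continuous_const.prodMk continuous_id).continuousAt)
      have hev : ∀ᶠ t in 𝓝 τ₀, De M (θ₀, t) < 0 := hco.eventually (eventually_lt_nhds h)
      obtain ⟨δ, hδ0, hδ⟩ := Metric.eventually_nhds_iff.mp hev
      set δ' := min (δ / 2) (τ₀ / 2) with hδ'
      have hδ'0 : 0 < δ' := lt_min (by linarith) (by linarith)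
      have hδ'δ : δ' < δ := lt_of_le_of_lt (min_le_left _ _) (by linarith)
      have hδ'τ : δ' < τ₀ := lt_of_le_of_lt (min_le_right _ _) (by linarith)
      have hanti : StrictAntiOn (fun t => Fe M (θ₀, t)) (Set.Icc (τ₀ - δ') τ₀) := by
        apply strictAntiOn_of_deriv_neg (convex_Icc _ _)
        · exact fun t ht =>
            (Fe_continuousAt_right hanal θ₀ t (by linarith [ht.1])).continuousWithinAt
        · intro t ht
          rw [interior_Icc] at ht
          rw [(Fe_hasDerivAt hanal θ₀ t (by linarith [ht.1])).deriv]
          apply hδ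
          rw [Real.dist_eq, abs_lt]
          constructor <;> [linarith [ht.1]; linarith [ht.2]]
      have h1 : Fe M (θ₀, τ₀) < Fe M (θ₀, τ₀ - δ') :=
        hanti ⟨by linarith, by linarith⟩ ⟨by linarith, le_refl _⟩ (by linarith)
      have h2 : Fe M (θ₀, τ₀ - δ') < 0 :=
        Fe_neg_below hanal hτm0 hnegdef hτs θ₀ (τ₀ - δ') (by linarith) (by linarith)
      rw [hτ₀Fe] at h1
      linarith
    · exact h
  -- box where De > 0
  have hDc : ContinuousAt (De M) (θ₀, τ₀) := De_continuousAt hanal _ hτ₀pos.le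
  have hev : ∀ᶠ p in 𝓝 ((θ₀ : ℝ), τ₀), 0 < De M p := hDc.eventually (eventually_gt_nhds hcpos)
  obtain ⟨r, hr0, hr⟩ := Metric.eventually_nhds_iff.mp hev
  set δ := min (r / 2) (τ₀ / 2) with hδdef
  have hδ0 : 0 < δ := lt_min (by linarith) (by linarith)
  have hδr : δ < r := lt_of_le_of_lt (min_le_left _ _) (by linarith)
  have hδτ₀ : δ < τ₀ := lt_of_le_of_lt (min_le_right _ _) (by linarith)
  have hbox : ∀ θ t : ℝ, dist θ θ₀ < δ → dist t τ₀ ≤ δ → 0 < De M (θ, t) := by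
    intro θ t h1 h2
    apply hr
    rw [Prod.dist_eq]
    exact max_lt (by simpa using lt_trans h1 hδr) (by simpa using lt_of_le_of_lt h2 hδr)
  -- ε for small times
  set ε := min τm τ₀ / 2 with hεdef
  have hε0 : 0 < ε := by have := lt_min hτm0 hτ₀pos; positivity
  have hετm : ε < τm := by have : min τm τ₀ ≤ τm := min_le_left _ _; linarith
  -- compact part: Fe (θ, ·) < 0 on [ε, τ₀ - δ] for θ near θ₀
  have hK : ∀ᶠ θ in 𝓝 θ₀, ∀ t ∈ Set.Icc ε (τ₀ - δ), Fe M (θ, t) < 0 := by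
    apply isCompact_Icc.eventually_forall_of_forall_eventually
    intro t ht
    have ht0 : 0 < t := lt_of_lt_of_le hε0 ht.1
    have hneg : Fe M (θ₀, t) < 0 :=
      Fe_neg_below hanal hτm0 hnegdef hτs θ₀ t ht0 (lt_of_le_of_lt ht.2 (by linarith))
    have hcont : ContinuousAt (Fe M) (θ₀, t) := (Fe_contDiffAt hanal (θ₀, t) ht0.le).continuousAt
    filter_upwards [hcont.eventually (eventually_lt_nhds hneg)] with z hz
    exact hz
  -- inverse function theorem setup
  have hF1 : ContDiffAt ℝ 1 (Fe M) (θ₀, τ₀) := Fe_contDiffAt hanal _ hτ₀pos.le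
  have hL : HasFDerivAt (Fe M) (fderiv ℝ (Fe M) (θ₀, τ₀)) (θ₀, τ₀) :=
    (hF1.differentiableAt one_ne_zero).hasFDerivAt
  set L := fderiv ℝ (Fe M) (θ₀, τ₀) with hLdef
  have hL01 : L ((0 : ℝ), (1 : ℝ)) = c := by
    have hcurve : HasDerivAt (fun t : ℝ => ((θ₀, t) : ℝ × ℝ)) (0, 1) τ₀ :=
      (hasDerivAt_const τ₀ θ₀).prodMk (hasDerivAt_id τ₀)
    have h1 : HasDerivAt (fun t => Fe M (θ₀, t)) (L (0, 1)) τ₀ :=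
      hL.comp_hasDerivAt τ₀ hcurve
    exact h1.unique (Fe_hasDerivAt hanal θ₀ τ₀ hτ₀pos.le)
  have hLsplit : ∀ a b : ℝ, L (a, b) = L (a, 0) + b * c := by
    intro a b
    have h1 : ((a, b) : ℝ × ℝ) = (a, 0) + b • ((0 : ℝ), (1 : ℝ)) := by
      simp [Prod.ext_iff]
    rw [h1, map_add, _root_.map_smul, hL01, smul_eq_mul]
  set A : (ℝ × ℝ) →L[ℝ] (ℝ × ℝ) := (ContinuousLinearMap.fst ℝ ℝ ℝ).prod L with hAdef
  set B : (ℝ × ℝ) →L[ℝ] (ℝ × ℝ) := (ContinuousLinearMap.fst ℝ ℝ ℝ).prod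
      (c⁻¹ • ((ContinuousLinearMap.snd ℝ ℝ ℝ) -
        L.comp ((ContinuousLinearMap.fst ℝ ℝ ℝ).prod 0))) with hBdef
  have hBA : Function.LeftInverse B A := by
    intro x
    simp only [hAdef, hBdef, ContinuousLinearMap.prod_apply, ContinuousLinearMap.coe_fst',
      ContinuousLinearMap.smul_apply, ContinuousLinearMap.sub_apply,
      ContinuousLinearMap.comp_apply, ContinuousLinearMap.zero_apply,
      ContinuousLinearMap.coe_snd']
    have := hLsplit x.1 x.2
    rw [Prod.ext_iff]
    constructor
    · rfl
    · show c⁻¹ * (L (x.1, x.2) - L (x.1, 0)) = x.2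
      rw [this]
      field_simp
      ring
  have hAB : Function.RightInverse B A := by
    intro y
    simp only [hAdef, hBdef, ContinuousLinearMap.prod_apply, ContinuousLinearMap.coe_fst',
      ContinuousLinearMap.smul_apply, ContinuousLinearMap.sub_apply,
      ContinuousLinearMap.comp_apply, ContinuousLinearMap.zero_apply,
      ContinuousLinearMap.coe_snd']
    rw [Prod.ext_iff]
    constructor
    · rfl
    · show L (y.1, c⁻¹ * (y.2 - L (y.1, 0))) = y.2
      rw [hLsplit y.1 (c⁻¹ * (y.2 - L (y.1, 0)))]
      field_simp
      ring
  set e : (ℝ × ℝ) ≃L[ℝ] (ℝ × ℝ) := ContinuousLinearEquiv.equivOfInverse A B hBA hAB with hedef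
  set G : ℝ × ℝ → ℝ × ℝ := fun p => (p.1, Fe M p) with hGdef
  have hGC : ContDiffAt ℝ 1 G (θ₀, τ₀) := contDiffAt_fst.prodMk hF1
  have hGd : HasFDerivAt G (e : (ℝ × ℝ) →L[ℝ] (ℝ × ℝ)) (θ₀, τ₀) := by
    have h1 : HasFDerivAt G A (θ₀, τ₀) := (hasFDerivAt_fst).prodMk hL
    exact h1
  have hG0 : G (θ₀, τ₀) = (θ₀, 0) := by simp [hGdef, hτ₀Fe]
  set g : ℝ × ℝ → ℝ × ℝ := hGC.localInverse hGd one_ne_zero with hgdef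
  have hginvC : ContDiffAt ℝ 1 g ((θ₀ : ℝ), (0 : ℝ)) := by
    have := hGC.to_localInverse hGd one_ne_zero
    rwa [hG0] at this
  have hgfix : g (θ₀, 0) = (θ₀, τ₀) := by
    have := hGC.localInverse_apply_image hGd one_ne_zero
    rwa [hG0] at this
  have hrinv : ∀ᶠ y in 𝓝 ((θ₀ : ℝ), (0 : ℝ)), G (g y) = y := by
    have h1 := (hGC.hasStrictFDerivAt' hGd one_ne_zero).eventually_right_inverse
    rw [hG0] at h1
    exact h1
  set φ : ℝ → ℝ := fun θ => (g (θ, 0)).2 with hφdef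
  have hφC : ContDiffAt ℝ 1 φ θ₀ :=
    contDiffAt_snd.comp θ₀ (hginvC.comp θ₀ (contDiffAt_id.prodMk contDiffAt_const))
  have hφ₀ : φ θ₀ = τ₀ := by rw [hφdef]; simp [hgfix]
  have hcurveT : Tendsto (fun θ : ℝ => ((θ, 0) : ℝ × ℝ)) (𝓝 θ₀) (𝓝 (θ₀, 0)) :=
    (continuous_id.prodMk continuous_const).continuousAt
  have hφzero : ∀ᶠ θ in 𝓝 θ₀, Fe M (θ, φ θ) = 0 := by
    filter_upwards [hcurveT.eventually hrinv] with θ h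
    have h1 : (g (θ, 0)).1 = θ := congrArg Prod.fst h
    have h2 : Fe M (g (θ, 0)) = 0 := congrArg Prod.snd h
    have h3 : ((θ, φ θ) : ℝ × ℝ) = g (θ, 0) := Prod.ext h1.symm rfl
    rw [h3]
    exact h2
  have hφnear : ∀ᶠ θ in 𝓝 θ₀, |φ θ - τ₀| < δ := by
    have h1 : ContinuousAt φ θ₀ := hφC.continuousAt
    rw [ContinuousAt, hφ₀] at h1
    have h2 := h1 (Metric.ball_mem_nhds τ₀ hδ0)
    filter_upwards [h2] with θ hθ
    simpa [Metric.mem_ball, Real.dist_eq] using hθ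
  have hθnear : ∀ᶠ θ in 𝓝 θ₀, dist θ θ₀ < δ := by
    filter_upwards [Metric.ball_mem_nhds θ₀ hδ0] with θ h
    exact h
  have hfinal : ∀ᶠ θ in 𝓝 θ₀, τs θ = φ θ := by
    filter_upwards [hK, hφzero, hφnear, hθnear] with θ hKθ hzθ hnθ hdθ
    rw [abs_lt] at hnθ
    have hφlo : τ₀ - δ < φ θ := by linarith [hnθ.1]
    have hφhi : φ θ < τ₀ + δ := by linarith [hnθ.2]
    have hφpos : 0 < φ θ := by linarith
    have hmono : StrictMonoOn (fun t => Fe M (θ, t)) (Set.Icc (τ₀ - δ) (τ₀ + δ)) := by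
      apply strictMonoOn_of_deriv_pos (convex_Icc _ _)
      · exact fun t ht =>
          (Fe_continuousAt_right hanal θ t (by linarith [ht.1])).continuousWithinAt
      · intro t ht
        rw [interior_Icc] at ht
        rw [(Fe_hasDerivAt hanal θ t (by linarith [ht.1])).deriv]
        exact hbox θ t hdθ (by
          rw [Real.dist_eq]
          exact abs_le.mpr ⟨by linarith [ht.1], by linarith [ht.2]⟩)
    have hbelow : ∀ t : ℝ, 0 < t → t < φ θ → Fe M (θ, t) < 0 := by
      intro t ht0 htφ
      by_cases h1 : t ≤ ε
      · exact Fe_neg_of_posDef hnegdef θ t ht0 (lt_of_le_of_lt h1 hετm)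
      · by_cases h2 : t ≤ τ₀ - δ
        · exact hKθ t ⟨(not_le.mp h1).le, h2⟩
        · have htmem : t ∈ Set.Icc (τ₀ - δ) (τ₀ + δ) :=
            ⟨(not_le.mp h2).le, by linarith⟩
          have hφmem : φ θ ∈ Set.Icc (τ₀ - δ) (τ₀ + δ) := ⟨hφlo.le, hφhi.le⟩
          have h3 := hmono htmem hφmem htφ
          simp only at h3
          rw [hzθ] at h3
          exact h3
    have hle : τs θ ≤ φ θ := (hτs θ).2 ⟨hφpos, by rw [Fe_eq]; exact hzθ⟩
    have hge : ¬ τs θ < φ θ := by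
      intro hlt
      obtain ⟨⟨hp, hz⟩, _⟩ := hτs θ
      rw [Fe_eq] at hz
      exact absurd hz (ne_of_lt (hbelow (τs θ) hp hlt))
    exact le_antisymm hle (not_lt.mp hge)
  exact hφC.congr_of_eventuallyEq hfinal
end

section
/- Suppose the inter-event time function τ_s is continuous and not constant on ℝ, M(τ) is not the zero matrix for any τ > 0, the 'angle' map φ induces a continuous map of the circle ℝ/2πℤ, and for each k ∈ {1, 2, 3, 4} the k-fold iterate φ^k has no fixed point on ℝ/2πℤ. Then for every θ₀ ∈ ℝ the sequence of inter-event times (τ_s(φ^k(θ₀)))_{k ∈ ℕ} does not converge; i.e., the inter-event times do not converge to a steady-state value for any initial state. -/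
open Matrix Real Filter

lemma line_circle_pts {p q x y : ℝ} (hpq : p ≠ 0 ∨ q ≠ 0)
    (hc : x ^ 2 + y ^ 2 = 1) (hl : p * x + q * y = 0) :
    (x, y) = (q / Real.sqrt (p ^ 2 + q ^ 2), -p / Real.sqrt (p ^ 2 + q ^ 2)) ∨
      (x, y) = (-q / Real.sqrt (p ^ 2 + q ^ 2), p / Real.sqrt (p ^ 2 + q ^ 2)) := by
  have hr2 : 0 < p ^ 2 + q ^ 2 := by
    rcases hpq with h | h
    · positivity
    · positivity
  set r := Real.sqrt (p ^ 2 + q ^ 2) with hrdef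
  have hrpos : 0 < r := Real.sqrt_pos.mpr hr2
  have hrsq : r ^ 2 = p ^ 2 + q ^ 2 := Real.sq_sqrt hr2.le
  have hx : x * (p ^ 2 + q ^ 2) = q * (q * x - p * y) := by linear_combination p * hl
  have hy : y * (p ^ 2 + q ^ 2) = -p * (q * x - p * y) := by linear_combination q * hl
  have h5 : (p ^ 2 + q ^ 2) * ((q * x - p * y) ^ 2) = (p ^ 2 + q ^ 2) * (p ^ 2 + q ^ 2) := by
    linear_combination (-(x * (p ^ 2 + q ^ 2) + q * (q * x - p * y))) * hx +
      (-(y * (p ^ 2 + q ^ 2) - p * (q * x - p * y))) * hy + (p ^ 2 + q ^ 2) ^ 2 * hc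
  have hu2 : (q * x - p * y) ^ 2 = p ^ 2 + q ^ 2 := mul_left_cancel₀ hr2.ne' h5
  have hur : (q * x - p * y - r) * (q * x - p * y + r) = 0 := by
    linear_combination hu2 - hrsq
  rcases mul_eq_zero.mp hur with h' | h'
  · have hu' : q * x - p * y = r := by linarith
    left
    have hxr : x * r = q := by
      have h6 : x * r * r = q * r := by
        calc x * r * r = x * (p ^ 2 + q ^ 2) := by rw [← hrsq]; ring
        _ = q * (q * x - p * y) := hx
        _ = q * r := by rw [hu']
      exact mul_right_cancel₀ hrpos.ne' h6
    have hyr : y * r = -p := by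
      have h6 : y * r * r = -p * r := by
        calc y * r * r = y * (p ^ 2 + q ^ 2) := by rw [← hrsq]; ring
        _ = -p * (q * x - p * y) := hy
        _ = -p * r := by rw [hu']
      exact mul_right_cancel₀ hrpos.ne' h6
    rw [Prod.mk.injEq]
    exact ⟨(eq_div_iff hrpos.ne').mpr hxr, (eq_div_iff hrpos.ne').mpr hyr⟩
  · have hu' : q * x - p * y = -r := by linarith
    right
    have hxr : x * r = -q := by
      have h6 : x * r * r = -q * r := by
        calc x * r * r = x * (p ^ 2 + q ^ 2) := by rw [← hrsq]; ring
        _ = q * (q * x - p * y) := hx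
        _ = -q * r := by rw [hu']; ring
      exact mul_right_cancel₀ hrpos.ne' h6
    have hyr : y * r = p := by
      have h6 : y * r * r = p * r := by
        calc y * r * r = y * (p ^ 2 + q ^ 2) := by rw [← hrsq]; ring
        _ = -p * (q * x - p * y) := hy
        _ = p * r := by rw [hu']; ring
      exact mul_right_cancel₀ hrpos.ne' h6
    rw [Prod.mk.injEq]
    exact ⟨(eq_div_iff hrpos.ne').mpr hxr, (eq_div_iff hrpos.ne').mpr hyr⟩

/-- The zero set on the circle of a nonzero binary quadratic form is contained in the union of
two nontrivial lines. -/
lemma quadform_lines {a b d : ℝ} (h : ¬(a = 0 ∧ b = 0 ∧ d = 0)) :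
    ∃ p₁ q₁ p₂ q₂ : ℝ, (p₁ ≠ 0 ∨ q₁ ≠ 0) ∧ (p₂ ≠ 0 ∨ q₂ ≠ 0) ∧
      ∀ x y : ℝ, x ^ 2 + y ^ 2 = 1 → a * x ^ 2 + 2 * b * x * y + d * y ^ 2 = 0 →
        p₁ * x + q₁ * y = 0 ∨ p₂ * x + q₂ * y = 0 := by
  by_cases ha : a = 0
  · by_cases hd : d = 0
    · have hb : b ≠ 0 := by tauto
      refine ⟨1, 0, 0, 1, Or.inl one_ne_zero, Or.inr one_ne_zero, ?_⟩
      intro x y hc hQ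
      have h2 : (2 * b) * (x * y) = 0 := by
        linear_combination hQ - x ^ 2 * ha - y ^ 2 * hd
      have hxy : x * y = 0 := by
        rcases mul_eq_zero.mp h2 with h' | h'
        · exact absurd h' (by positivity)
        · exact h'
      rcases mul_eq_zero.mp hxy with h' | h'
      · left; rw [h']; ring
      · right; rw [h']; ring
    · refine ⟨0, 1, 2 * b, d, Or.inr one_ne_zero, Or.inr hd, ?_⟩
      intro x y hc hQ
      have h2 : y * (2 * b * x + d * y) = 0 := by linear_combination hQ - x ^ 2 * ha
      rcases mul_eq_zero.mp h2 with h' | h'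
      · left; rw [h']; ring
      · right; linarith
  · by_cases hD : 0 ≤ b ^ 2 - a * d
    · have hs2 : Real.sqrt (b ^ 2 - a * d) ^ 2 = b ^ 2 - a * d := Real.sq_sqrt hD
      set s := Real.sqrt (b ^ 2 - a * d) with hsdef
      refine ⟨a, b + s, a, b - s, Or.inl ha, Or.inl ha, ?_⟩
      intro x y hc hQ
      have key : (a * x + (b + s) * y) * (a * x + (b - s) * y) = 0 := by
        linear_combination a * hQ - y ^ 2 * hs2
      exact mul_eq_zero.mp key
    · push_neg at hD
      refine ⟨1, 0, 1, 0, Or.inl one_ne_zero, Or.inl one_ne_zero, ?_⟩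
      intro x y hc hQ
      exfalso
      have h1 : (a * x + b * y) ^ 2 + (a * d - b ^ 2) * y ^ 2 = 0 := by
        linear_combination a * hQ
      have hy2 : y ^ 2 = 0 := by nlinarith [sq_nonneg (a * x + b * y), sq_nonneg y]
      have hy : y = 0 := pow_eq_zero_iff (two_ne_zero) |>.mp hy2
      rw [hy] at h1 hc
      have hax2 : (a * x) ^ 2 = 0 := by linear_combination h1
      have hax : a * x = 0 := pow_eq_zero_iff (two_ne_zero) |>.mp hax2
      have hx : x = 0 := (mul_eq_zero.mp hax).resolve_left ha
      rw [hx] at hc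
      norm_num at hc


/-- Suppose the inter-event time function `τ_s` is continuous and not
constant, `M(τ) ≠ 0` for every `τ > 0`, the "angle" map `φ` induces a continuous map of
the circle `ℝ/2πℤ`, and `φ^k` has no fixed point on the circle for `k ∈ {1, 2, 3, 4}`.
Then for every initial angle the sequence of inter-event times `τ_s(φ^k(θ₀))` does not
converge. -/
theorem iet_do_not_converge (M : ℝ → Matrix (Fin 2) (Fin 2) ℝ)
    (hsymm : ∀ τ, (M τ).IsSymm)
    (hM0 : ∀ τ : ℝ, 0 < τ → M τ ≠ 0)
    (G : ℝ → Matrix (Fin 2) (Fin 2) ℝ)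
    (τs : ℝ → ℝ)
    (hτs : ∀ θ : ℝ, IsLeast
      {τ : ℝ | 0 < τ ∧
        ![Real.cos θ, Real.sin θ] ⬝ᵥ (M τ).mulVec ![Real.cos θ, Real.sin θ] = 0} (τs θ))
    (hcont : Continuous τs)
    (hnonconst : ∃ θ₁ θ₂ : ℝ, τs θ₁ ≠ τs θ₂)
    (φ : ℝ → ℝ)
    (hangle : ∀ θ : ℝ, ∃ r : ℝ, 0 < r ∧
      (G (τs θ)).mulVec ![Real.cos θ, Real.sin θ] = r • ![Real.cos (φ θ), Real.sin (φ θ)])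
    (hφcont : Continuous φ)
    (hφcircle : ∀ θ : ℝ, ∃ n : ℤ, φ (θ + 2 * π) = φ θ + 2 * π * n)
    (hnofix : ∀ k : ℕ, k ∈ Finset.Icc 1 4 → ∀ θ : ℝ, ¬ ∃ n : ℤ, φ^[k] θ = θ + 2 * π * n) :
    ∀ θ₀ : ℝ, ¬ ∃ L : ℝ, Tendsto (fun k : ℕ => τs (φ^[k] θ₀)) atTop (nhds L) := by
  intro θ₀ hLex
  obtain ⟨L, hL⟩ := hLex
  haveI : Fact (0 < 2 * π) := ⟨Real.two_pi_pos⟩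
  haveI : CompactSpace Real.Angle := inferInstanceAs (CompactSpace (AddCircle (2 * π)))
  -- τs is 2π-periodic
  have hτper : Function.Periodic τs (2 * π) := by
    intro θ
    have h1 := hτs (θ + 2 * π)
    rw [Real.cos_add_two_pi, Real.sin_add_two_pi] at h1
    exact h1.unique (hτs θ)
  set τh : Real.Angle → ℝ := hτper.lift with hτhdef
  have hτh_coe : ∀ θ : ℝ, τh (θ : Real.Angle) = τs θ := fun _ => rfl
  have hτhcont : Continuous τh := hcont.quotient_liftOn' _
  -- the induced circle map
  have hφper : Function.Periodic (fun θ : ℝ => ((φ θ : ℝ) : Real.Angle)) (2 * π) := by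
    intro θ
    obtain ⟨n, hn⟩ := hφcircle θ
    simp only [hn]
    exact Real.Angle.angle_eq_iff_two_pi_dvd_sub.mpr ⟨n, by ring⟩
  set Φ : Real.Angle → Real.Angle := hφper.lift with hΦdef
  have hΦ_coe : ∀ θ : ℝ, Φ (θ : Real.Angle) = ((φ θ : ℝ) : Real.Angle) := fun _ => rfl
  have hΦcont : Continuous Φ :=
    (Real.Angle.continuous_coe.comp hφcont).quotient_liftOn' _
  -- the sequence of angles
  set u : ℕ → Real.Angle := fun k => ((φ^[k] θ₀ : ℝ) : Real.Angle) with hudef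
  have hu_succ : ∀ k, u (k + 1) = Φ (u k) := by
    intro k
    show ((φ^[k + 1] θ₀ : ℝ) : Real.Angle) = Φ ((φ^[k] θ₀ : ℝ) : Real.Angle)
    rw [hΦ_coe, Function.iterate_succ_apply']
  have hu_add : ∀ i k, u (k + i) = Φ^[i] (u k) := by
    intro i
    induction i with
    | zero => intro k; simp
    | succ n ih =>
      intro k
      have : k + (n + 1) = (k + n) + 1 := by omega
      rw [this, hu_succ, ih, ← Function.iterate_succ_apply' Φ]
  -- extract a convergent subsequence
  obtain ⟨x₀, ψ, hψ, hψt⟩ := CompactSpace.tendsto_subseq u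
  -- every iterate of the limit point has inter-event time L
  have key : ∀ i : ℕ, τh (Φ^[i] x₀) = L := by
    intro i
    have h1 : Tendsto (fun j => u (ψ j + i)) atTop (nhds (Φ^[i] x₀)) := by
      have h2 : Tendsto (Φ^[i] ∘ (u ∘ ψ)) atTop (nhds (Φ^[i] x₀)) :=
        ((hΦcont.iterate i).continuousAt.tendsto).comp hψt
      have h3 : (fun j => u (ψ j + i)) = Φ^[i] ∘ (u ∘ ψ) := by
        funext j
        exact hu_add i (ψ j)
      rw [h3]
      exact h2
    have h2 : Tendsto (fun j => τh (u (ψ j + i))) atTop (nhds (τh (Φ^[i] x₀))) :=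
      (hτhcont.continuousAt.tendsto).comp h1
    have h3 : Tendsto (fun j => τh (u (ψ j + i))) atTop (nhds L) := by
      have hcomp : Tendsto (fun j => ψ j + i) atTop atTop :=
        tendsto_atTop_mono (fun j => Nat.le_add_right _ _) hψ.tendsto_atTop
      exact hL.comp hcomp
    exact tendsto_nhds_unique h2 h3
  -- representative of the limit point
  obtain ⟨θs, hθs⟩ : ∃ θ : ℝ, x₀ = (θ : Real.Angle) :=
    ⟨Quotient.out x₀, (Quotient.out_eq x₀).symm⟩
  have hΦit : ∀ i : ℕ, Φ^[i] x₀ = ((φ^[i] θs : ℝ) : Real.Angle) := by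
    intro i
    induction i with
    | zero => simpa using hθs
    | succ n ih =>
      rw [Function.iterate_succ_apply', ih, hΦ_coe]
      exact congrArg _ (Function.iterate_succ_apply' φ n θs).symm
  have hτval : ∀ i : ℕ, τs (φ^[i] θs) = L := by
    intro i
    have h := key i
    rwa [hΦit i, hτh_coe] at h
  have hL0 : 0 < L := by
    have h := (hτs (φ^[0] θs)).1.1
    rwa [hτval 0] at h
  -- the quadratic equation satisfied by each iterate
  have hb' : M L 1 0 = M L 0 1 := (hsymm L).apply 0 1
  have hdot : ∀ (c s : ℝ) (N : Matrix (Fin 2) (Fin 2) ℝ),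
      ![c, s] ⬝ᵥ N.mulVec ![c, s] =
        c * (N 0 0 * c + N 0 1 * s) + s * (N 1 0 * c + N 1 1 * s) := by
    intro c s N
    simp [dotProduct, Matrix.mulVec, Fin.sum_univ_two]
  have hquad : ∀ i : ℕ,
      M L 0 0 * (Real.cos (φ^[i] θs)) ^ 2 +
        2 * (M L 0 1) * (Real.cos (φ^[i] θs)) * (Real.sin (φ^[i] θs)) +
        M L 1 1 * (Real.sin (φ^[i] θs)) ^ 2 = 0 := by
    intro i
    have h := (hτs (φ^[i] θs)).1.2
    rw [hτval i, hdot, hb'] at h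
    linear_combination h
  have habd : ¬(M L 0 0 = 0 ∧ M L 0 1 = 0 ∧ M L 1 1 = 0) := by
    rintro ⟨h00, h01, h11⟩
    apply hM0 L hL0
    ext i j
    fin_cases i <;> fin_cases j <;>
      simp [h00, h01, h11, hb'.trans h01]
  obtain ⟨p₁, q₁, p₂, q₂, hl₁, hl₂, hlines⟩ := quadform_lines habd
  -- the five points lie among four explicit points
  have hmem : ∀ i : ℕ, ∃ j : Fin 4,
      (Real.cos (φ^[i] θs), Real.sin (φ^[i] θs)) =
      ![(q₁ / Real.sqrt (p₁ ^ 2 + q₁ ^ 2), -p₁ / Real.sqrt (p₁ ^ 2 + q₁ ^ 2)),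
        (-q₁ / Real.sqrt (p₁ ^ 2 + q₁ ^ 2), p₁ / Real.sqrt (p₁ ^ 2 + q₁ ^ 2)),
        (q₂ / Real.sqrt (p₂ ^ 2 + q₂ ^ 2), -p₂ / Real.sqrt (p₂ ^ 2 + q₂ ^ 2)),
        (-q₂ / Real.sqrt (p₂ ^ 2 + q₂ ^ 2), p₂ / Real.sqrt (p₂ ^ 2 + q₂ ^ 2))] j := by
    intro i
    have hc : (Real.cos (φ^[i] θs)) ^ 2 + (Real.sin (φ^[i] θs)) ^ 2 = 1 :=
      Real.cos_sq_add_sin_sq _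
    rcases hlines _ _ hc (hquad i) with h' | h'
    · rcases line_circle_pts hl₁ hc h' with h'' | h''
      · exact ⟨0, h''⟩
      · exact ⟨1, h''⟩
    · rcases line_circle_pts hl₂ hc h' with h'' | h''
      · exact ⟨2, h''⟩
      · exact ⟨3, h''⟩
  -- pigeonhole among five iterates
  choose g hg using fun i : Fin 5 => hmem (i : ℕ)
  obtain ⟨i, j, hij, hgij⟩ :=
    Fintype.exists_ne_map_eq_of_card_lt g (by simp)
  have main : ∀ i j : Fin 5, (i : ℕ) < (j : ℕ) →
      (Real.cos (φ^[(i : ℕ)] θs), Real.sin (φ^[(i : ℕ)] θs)) =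
      (Real.cos (φ^[(j : ℕ)] θs), Real.sin (φ^[(j : ℕ)] θs)) → False := by
    intro i j hlt hpair
    rw [Prod.mk.injEq] at hpair
    obtain ⟨hcos, hsin⟩ := hpair
    have hang : ((φ^[(i : ℕ)] θs : ℝ) : Real.Angle) = ((φ^[(j : ℕ)] θs : ℝ) : Real.Angle) :=
      Real.Angle.cos_sin_inj hcos hsin
    obtain ⟨k, hk⟩ := Real.Angle.angle_eq_iff_two_pi_dvd_sub.mp hang
    set m : ℕ := (j : ℕ) - (i : ℕ) with hmdef
    have hm1 : 1 ≤ m := by omega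
    have hm4 : m ≤ 4 := by
      have := j.isLt
      omega
    have hiter : φ^[m] (φ^[(i : ℕ)] θs) = φ^[(j : ℕ)] θs := by
      rw [← Function.iterate_add_apply]
      congr 1
      omega
    refine hnofix m (Finset.mem_Icc.mpr ⟨hm1, hm4⟩) (φ^[(i : ℕ)] θs) ⟨-k, ?_⟩
    rw [hiter]
    push_cast
    linarith
  rcases hij.lt_or_gt with hlt | hlt
  · exact main i j hlt (by rw [hg i, hg j, hgij])
  · exact main j i hlt (by rw [hg i, hg j, hgij])
end

section
/- Let φ : ℝ → ℝ be continuous and let θ* ∈ (θ̄₁, θ̄₂) satisfy φ(θ*) = θ*. Suppose: (i) φ(θ) > θ for all θ ∈ M₁ := [θ̄₁, θ*); (ii) φ(θ) < θ for all θ ∈ M₂ := (θ*, θ̄₂]; (iii) φ²(θ) > θ for all θ ∈ M₁; and (iv) [θ̄₁, θ̄₂] is positively invariant under φ, i.e., φ([θ̄₁, θ̄₂]) ⊆ [θ̄₁, θ̄₂]. Then θ* is an asymptotically stable fixed point of the dynamics θ_{k+1} = φ(θ_k), and for every θ₀ ∈ [θ̄₁, θ̄₂] the iterates φ^k(θ₀)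 converge to θ* as k → ∞ (so [θ̄₁, θ̄₂] is contained in the region of convergence of θ*). -/
open Filter

private lemma orbit_mem {φ : ℝ → ℝ} {a b : ℝ}
    (h4 : Set.MapsTo φ (Set.Icc a b) (Set.Icc a b))
    {w : ℝ} (hw : w ∈ Set.Icc a b) : ∀ k, φ^[k] w ∈ Set.Icc a b := by
  intro k
  induction k with
  | zero => simpa
  | succ n ih => rw [Function.iterate_succ_apply']; exact h4 ih

private lemma fix2_eq {φ : ℝ → ℝ} {a b u : ℝ} (hfix : φ u = u)
    (h2 : ∀ θ ∈ Set.Ioc u b, φ θ < θ)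
    (h3 : ∀ θ ∈ Set.Ico a u, θ < φ^[2] θ)
    (h4 : Set.MapsTo φ (Set.Icc a b) (Set.Icc a b)) :
    ∀ w ∈ Set.Icc a b, φ (φ w) = w → w = u := by
  have hit : ∀ t : ℝ, φ^[2] t = φ (φ t) := by
    intro t; rw [Function.iterate_succ_apply', Function.iterate_one]
  intro w hw hww
  rcases lt_trichotomy w u with h | h | h
  · have := h3 w ⟨hw.1, h⟩
    rw [hit, hww] at this
    exact absurd this (lt_irrefl w)
  · exact h
  · exfalso
    have hfw : φ w < w := h2 w ⟨h, hw.2⟩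
    have hvI : φ w ∈ Set.Icc a b := h4 hw
    rcases lt_trichotomy (φ w) u with h' | h' | h'
    · have := h3 (φ w) ⟨hvI.1, h'⟩
      rw [hit, hww] at this
      exact absurd this (lt_irrefl _)
    · rw [h', hfix] at hww; rw [hww] at h; exact absurd h (lt_irrefl w)
    · have := h2 (φ w) ⟨h', hvI.2⟩
      rw [hww] at this
      exact absurd (this.trans hfw) (lt_irrefl _)

private lemma two_step_lt {φ : ℝ → ℝ} (hφ : Continuous φ) {a b u : ℝ}
    (hau : a < u) (hub : u < b) (hfix : φ u = u)
    (h2 : ∀ θ ∈ Set.Ioc u b, φ θ < θ)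
    (h3 : ∀ θ ∈ Set.Ico a u, θ < φ^[2] θ)
    (h4 : Set.MapsTo φ (Set.Icc a b) (Set.Icc a b)) :
    ∀ y ∈ Set.Ioc u b, φ (φ y) < y := by
  have hit : ∀ t : ℝ, φ^[2] t = φ (φ t) := by
    intro t; rw [Function.iterate_succ_apply', Function.iterate_one]
  have hne : ∀ z ∈ Set.Ioc u b, φ (φ z) ≠ z := by
    intro z hz h
    exact absurd (fix2_eq hfix h2 h3 h4 z ⟨(hau.trans hz.1).le, hz.2⟩ h) (ne_of_gt hz.1)
  by_contra hcon
  push_neg at hcon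
  obtain ⟨y₀, hy₀, hy₀2⟩ := hcon
  have hy₀2' : y₀ < φ (φ y₀) := lt_of_le_of_ne hy₀2 (Ne.symm (hne y₀ hy₀))
  -- all points of Ioc u b satisfy z < φ (φ z)
  have hsign : ∀ z ∈ Set.Ioc u b, z < φ (φ z) := by
    intro z hz
    by_contra hzz
    push_neg at hzz
    have hzz' : φ (φ z) < z := lt_of_le_of_ne hzz (hne z hz)
    have hcont : ContinuousOn (fun t => φ (φ t) - t) (Set.uIcc z y₀) :=
      ((hφ.comp hφ).sub continuous_id).continuousOn
    have h0 : (0 : ℝ) ∈ Set.uIcc (φ (φ z) - z) (φ (φ y₀) - y₀) := by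
      rw [Set.mem_uIcc]; left; constructor <;> linarith
    obtain ⟨w, hw, hw0⟩ := intermediate_value_uIcc hcont h0
    have hwI : w ∈ Set.Ioc u b := by
      rcases Set.mem_uIcc.mp hw with ⟨h1', h2'⟩ | ⟨h1', h2'⟩
      · exact ⟨hz.1.trans_le h1', h2'.trans hy₀.2⟩
      · exact ⟨hy₀.1.trans_le h1', h2'.trans hz.2⟩
    have hw0' : φ (φ w) - w = 0 := hw0
    exact hne w hwI (by linarith)
  set s : ℕ → ℝ := fun n => φ^[2 * n] y₀ with hs
  have hy₀I : y₀ ∈ Set.Icc a b := ⟨(hau.trans hy₀.1).le, hy₀.2⟩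
  have hsucc : ∀ n, s (n + 1) = φ (φ (s n)) := by
    intro n
    show φ^[2 * (n + 1)] y₀ = φ (φ (φ^[2 * n] y₀))
    rw [show 2 * (n + 1) = 2 + 2 * n by ring, Function.iterate_add_apply]
    rw [hit]
  have hmem2 : ∀ n, s n ∈ Set.Ioc u b := by
    intro n
    induction n with
    | zero => simpa [hs] using hy₀
    | succ n ih =>
      refine ⟨?_, (orbit_mem h4 hy₀I (2 * (n + 1))).2⟩
      rw [hsucc]
      exact ih.1.trans (hsign _ ih)
  have hmono : StrictMono s := by
    apply strictMono_nat_of_lt_succ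
    intro n
    rw [hsucc]
    exact hsign _ (hmem2 n)
  have hbdd : BddAbove (Set.range s) := by
    refine ⟨b, ?_⟩
    rintro _ ⟨n, rfl⟩
    exact (hmem2 n).2
  have htend := tendsto_atTop_ciSup hmono.monotone hbdd
  set ℓ := ⨆ n, s n with hℓ
  have htend1 : Tendsto (fun n => s (n + 1)) atTop (nhds ℓ) :=
    htend.comp (tendsto_add_atTop_nat 1)
  have htend2 : Tendsto (fun n => φ (φ (s n))) atTop (nhds (φ (φ ℓ))) :=
    ((hφ.comp hφ).tendsto ℓ).comp htend
  have hfixℓ : φ (φ ℓ) = ℓ := by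
    refine tendsto_nhds_unique (htend2.congr fun n => (hsucc n).symm) htend1
  have hℓu : u < ℓ := hy₀.1.trans_le (by exact le_ciSup hbdd 0)
  have hℓb : ℓ ≤ b := ciSup_le fun n => (hmem2 n).2
  exact absurd (fix2_eq hfix h2 h3 h4 ℓ ⟨(hau.trans hℓu).le, hℓb⟩ hfixℓ) (ne_of_gt hℓu)

private lemma key_right {φ : ℝ → ℝ} (hφ : Continuous φ) {a b u : ℝ}
    (hau : a < u) (hub : u < b) (hfix : φ u = u)
    (h4 : Set.MapsTo φ (Set.Icc a b) (Set.Icc a b))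
    (hB : ∀ y ∈ Set.Ioc u b, φ (φ y) < y) :
    ∀ v ∈ Set.Ico a u, ∀ y, u ≤ y → y ≤ φ v → v < φ y := by
  intro v hv y hy1 hy2
  by_contra hcon
  push_neg at hcon
  have hvI : v ∈ Set.Icc a b := ⟨hv.1, (hv.2.trans hub).le⟩
  have hfvb : φ v ≤ b := (h4 hvI).2
  have hsub := intermediate_value_Icc' hy1 hφ.continuousOn
  have hvmem : v ∈ Set.Icc (φ y) (φ u) := ⟨hcon, by rw [hfix]; exact hv.2.le⟩
  obtain ⟨c, hc, hfc⟩ := hsub hvmem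
  have hcu : u < c := by
    rcases eq_or_lt_of_le hc.1 with h | h
    · exfalso; rw [← h, hfix] at hfc; exact absurd hfc.symm (ne_of_lt hv.2)
    · exact h
  have hcb : c ∈ Set.Ioc u b := ⟨hcu, hc.2.trans (hy2.trans hfvb)⟩
  have := hB c hcb
  rw [hfc] at this
  linarith [hc.2, hy2]

private lemma invariant_interval {φ : ℝ → ℝ} (hφ : Continuous φ) {a b u : ℝ}
    (hau : a < u) (hub : u < b) (hfix : φ u = u)
    (h1 : ∀ θ ∈ Set.Ico a u, θ < φ θ)
    (h2 : ∀ θ ∈ Set.Ioc u b, φ θ < θ)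
    (h4 : Set.MapsTo φ (Set.Icc a b) (Set.Icc a b))
    (hkey : ∀ v ∈ Set.Ico a u, ∀ y, u ≤ y → y ≤ φ v → v < φ y) :
    ∀ ε > 0, ∃ p q : ℝ, u - ε < p ∧ a ≤ p ∧ p < u ∧ u < q ∧ q < u + ε ∧ q ≤ b ∧
      Set.MapsTo φ (Set.Icc p q) (Set.Icc p q) := by
  intro ε hε
  set ε' := min ε (min (u - a) (b - u)) with hε'def
  have hε'pos : 0 < ε' := by
    apply lt_min hε
    apply lt_min <;> linarith
  have hε'a : ε' ≤ u - a := (min_le_right _ _).trans (min_le_left _ _)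
  have hε'b : ε' ≤ b - u := (min_le_right _ _).trans (min_le_right _ _)
  have hε'ε : ε' ≤ ε := min_le_left _ _
  -- first continuity estimate
  have hcont := Metric.continuousAt_iff.mp (hφ.continuousAt (x := u))
  obtain ⟨η₀, hη₀pos, hη₀⟩ := hcont (ε' / 2) (by linarith)
  set η₁ := min η₀ (ε' / 2) with hη₁def
  have hη₁pos : 0 < η₁ := lt_min hη₀pos (by linarith)
  have hη₁' : ∀ t : ℝ, |t - u| ≤ η₁ / 2 → |φ t - u| < ε' / 2 := by
    intro t ht
    have : dist t u < η₀ := by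
      rw [Real.dist_eq]
      calc |t - u| ≤ η₁ / 2 := ht
        _ < η₁ := by linarith
        _ ≤ η₀ := min_le_left _ _
    have := hη₀ this
    rwa [Real.dist_eq, hfix] at this
  set p := u - η₁ / 2 with hpdef
  have hpu : p < u := by simp only [hpdef]; linarith
  have hpa : a ≤ p := by
    have : η₁ / 2 < u - a := by
      have : η₁ ≤ ε' / 2 := min_le_right _ _
      linarith
    simp only [hpdef]; linarith
  have hpε : u - ε < p := by
    have : η₁ ≤ ε' / 2 := min_le_right _ _
    simp only [hpdef]; linarith
  -- second continuity estimate: target u - p = η₁/2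
  obtain ⟨η₂, hη₂pos, hη₂⟩ := hcont (η₁ / 2) (by linarith)
  set η := min (η₁ / 2) (η₂ / 2) with hηdef
  have hηpos : 0 < η := lt_min (by linarith) (by linarith)
  -- maximum of φ on [p, u]
  obtain ⟨v, hvmem, hvmax⟩ := isCompact_Icc.exists_isMaxOn (s := Set.Icc p u)
    ⟨u, by constructor <;> [exact hpu.le; exact le_refl u]⟩ hφ.continuousOn
  have hvmax' : ∀ t ∈ Set.Icc p u, φ t ≤ φ v := fun t ht => hvmax ht
  have hfv_lt : φ v < u + ε' / 2 := by
    have : |v - u| ≤ η₁ / 2 := by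
      rw [abs_le]
      constructor
      · have := hvmem.1; simp only [hpdef] at this; linarith
      · linarith [hvmem.2]
    have := hη₁' v this
    rw [abs_lt] at this
    linarith [this.1]
  set q := max (φ v) (u + η) with hqdef
  have hqu : u < q := lt_max_of_lt_right (by linarith)
  have hqε : q < u + ε := by
    apply max_lt
    · linarith
    · have h1' : η ≤ η₁ / 2 := min_le_left _ _
      have h2' : η₁ ≤ ε' / 2 := min_le_right _ _
      linarith
  have hqb : q ≤ b := by
    apply le_of_lt
    apply max_lt
    · linarith
    · have h1' : η ≤ η₁ / 2 := min_le_left _ _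
      have h2' : η₁ ≤ ε' / 2 := min_le_right _ _
      linarith
  refine ⟨p, q, hpε, hpa, hpu, hqu, hqε, hqb, ?_⟩
  intro t ht
  obtain ⟨htp, htq⟩ := ht
  constructor
  · -- p ≤ φ t
    rcases lt_trichotomy t u with h | h | h
    · exact (lt_of_le_of_lt htp (h1 t ⟨hpa.trans htp, h⟩)).le
    · rw [h, hfix]; exact hpu.le
    · rcases le_or_gt t (u + η) with h' | h'
      · have hd : dist t u < η₂ := by
          rw [Real.dist_eq, abs_of_pos (by linarith : (0:ℝ) < t - u)]
          have h₂' : η ≤ η₂ / 2 := min_le_right _ _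
          linarith
        have := hη₂ hd
        rw [Real.dist_eq, hfix, abs_lt] at this
        simp only [hpdef]
        linarith [this.1]
      · -- t > u + η, so t ≤ φ v, use key lemma
        have htfv : t ≤ φ v := by
          rcases max_cases (φ v) (u + η) with ⟨hq1, _⟩ | ⟨hq1, _⟩
          · rw [hqdef] at htq; rwa [hq1] at htq
          · rw [hqdef] at htq; rw [hq1] at htq; linarith
        have hvu : v < u := by
          rcases eq_or_lt_of_le hvmem.2 with h'' | h''
          · exfalso; rw [h'', hfix] at htfv; linarith
          · exact h''
        have := hkey v ⟨hpa.trans hvmem.1, hvu⟩ t h.le htfv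
        linarith [hvmem.1]
  · -- φ t ≤ q
    rcases le_or_gt t u with h | h
    · exact (hvmax' t ⟨htp, h⟩).trans (le_max_left _ _)
    · exact ((h2 t ⟨h, htq.trans hqb⟩).le).trans htq

private lemma cluster_pred {φ : ℝ → ℝ} (hφ : Continuous φ) {a b : ℝ} {x : ℕ → ℝ}
    (hb : ∀ k, x k ∈ Set.Icc a b) (hstep : ∀ k, x (k + 1) = φ (x k)) {c : ℝ}
    (hfreq : ∀ ε > 0, ∃ᶠ k in atTop, |x k - c| < ε) :
    ∃ p ∈ Set.Icc a b, φ p = c ∧ ∀ ε > 0, ∃ᶠ k in atTop, |x k - p| < ε := by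
  have hP : ∀ n : ℕ, ∃ᶠ k in atTop, n + 1 ≤ k ∧ |x k - c| < 1 / (n + 1) := by
    intro n
    exact (eventually_ge_atTop (n + 1)).and_frequently
      (hfreq (1 / (n + 1)) (by positivity))
  obtain ⟨ks, hks_mono, hks⟩ := Filter.extraction_forall_of_frequently hP
  have htendc : Tendsto (fun n => x (ks n)) atTop (nhds c) := by
    rw [Metric.tendsto_atTop]
    intro ε hε
    obtain ⟨N, hN⟩ := exists_nat_one_div_lt hε
    refine ⟨N, fun n hn => ?_⟩
    rw [Real.dist_eq]
    calc |x (ks n) - c| < 1 / (n + 1) := (hks n).2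
      _ ≤ 1 / (N + 1) := by
          apply one_div_le_one_div_of_le (by positivity)
          exact_mod_cast Nat.succ_le_succ hn
      _ < ε := hN
  set y : ℕ → ℝ := fun n => x (ks n - 1) with hy
  obtain ⟨p, hpI, ms, hms_mono, hms_tend⟩ := isCompact_Icc.tendsto_subseq
    (x := y) (fun n => hb _)
  have hfp : φ p = c := by
    have e1 : ∀ i, φ (y (ms i)) = x (ks (ms i)) := by
      intro i
      rw [hy]
      simp only
      rw [← hstep (ks (ms i) - 1)]
      congr 1
      have := (hks (ms i)).1
      omega
    have t1 : Tendsto (fun i => φ (y (ms i))) atTop (nhds (φ p)) :=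
      (hφ.tendsto p).comp hms_tend
    have t2 : Tendsto (fun i => x (ks (ms i))) atTop (nhds c) :=
      htendc.comp hms_mono.tendsto_atTop
    exact tendsto_nhds_unique (t1.congr e1) t2
  refine ⟨p, hpI, hfp, ?_⟩
  intro ε hε
  rw [Filter.frequently_atTop]
  intro N
  obtain ⟨i₀, hi₀⟩ := Metric.tendsto_atTop.mp hms_tend ε hε
  set i := max i₀ N with hi
  refine ⟨ks (ms i) - 1, ?_, ?_⟩
  · have h1' : ms i + 1 ≤ ks (ms i) := (hks (ms i)).1
    have h2' : i ≤ ms i := hms_mono.le_apply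
    omega
  · have := hi₀ i (le_max_left _ _)
    rwa [Function.comp_apply, Real.dist_eq] at this

/-- Sufficient condition for asymptotic stability of a fixed point of
the "angle" map: if `φ` is continuous, `θ* ∈ (θ̄₁, θ̄₂)` is a fixed point,
`φ(θ) > θ` on `[θ̄₁, θ*)`, `φ(θ) < θ` on `(θ*, θ̄₂]`, `φ²(θ) > θ` on `[θ̄₁, θ*)`, and
`[θ̄₁, θ̄₂]` is positively invariant under `φ`, then `θ*` is an asymptotically stable
fixed point and every orbit starting in `[θ̄₁, θ̄₂]` converges to `θ*`. -/
theorem asymptotically_stable_fixed_point (φ : ℝ → ℝ) (hφ : Continuous φ)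
    (θb₁ θb₂ θs : ℝ) (hmem : θs ∈ Set.Ioo θb₁ θb₂) (hfix : φ θs = θs)
    (h1 : ∀ θ ∈ Set.Ico θb₁ θs, θ < φ θ)
    (h2 : ∀ θ ∈ Set.Ioc θs θb₂, φ θ < θ)
    (h3 : ∀ θ ∈ Set.Ico θb₁ θs, θ < φ^[2] θ)
    (h4 : Set.MapsTo φ (Set.Icc θb₁ θb₂) (Set.Icc θb₁ θb₂)) :
    (∀ ε > 0, ∃ δ > 0, ∀ θ₀ : ℝ, |θ₀ - θs| < δ → ∀ k : ℕ, |φ^[k] θ₀ - θs| < ε) ∧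
    (∀ θ₀ ∈ Set.Icc θb₁ θb₂, Tendsto (fun k : ℕ => φ^[k] θ₀) atTop (nhds θs)) := by
  obtain ⟨hau, hub⟩ := hmem
  have hB := two_step_lt hφ hau hub hfix h2 h3 h4
  have hkey := key_right hφ hau hub hfix h4 hB
  constructor
  · -- stability
    intro ε hε
    obtain ⟨p, q, hpε, hpa, hpu, hqu, hqε, hqb, hmapsto⟩ :=
      invariant_interval hφ hau hub hfix h1 h2 h4 hkey ε hε
    refine ⟨min (θs - p) (q - θs), lt_min (by linarith) (by linarith), ?_⟩
    intro θ₀ hθ₀ k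
    have hθ₀J : θ₀ ∈ Set.Icc p q := by
      rw [abs_lt] at hθ₀
      have m1 := min_le_left (θs - p) (q - θs)
      have m2 := min_le_right (θs - p) (q - θs)
      constructor <;> linarith [hθ₀.1, hθ₀.2]
    have hk : φ^[k] θ₀ ∈ Set.Icc p q := hmapsto.iterate k hθ₀J
    rw [abs_lt]
    constructor <;> linarith [hk.1, hk.2]
  · -- convergence
    intro θ₀ hθ₀
    set x : ℕ → ℝ := fun k => φ^[k] θ₀ with hx
    have hmemI : ∀ k, x k ∈ Set.Icc θb₁ θb₂ := orbit_mem h4 hθ₀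
    have hstep : ∀ k, x (k + 1) = φ (x k) := fun k => Function.iterate_succ_apply' φ k θ₀
    have hBle : IsBoundedUnder (· ≤ ·) atTop x :=
      ⟨θb₂, Filter.eventually_map.mpr (Filter.Eventually.of_forall fun k => (hmemI k).2)⟩
    have hBge : IsBoundedUnder (· ≥ ·) atTop x :=
      ⟨θb₁, Filter.eventually_map.mpr (Filter.Eventually.of_forall fun k => (hmemI k).1)⟩
    have hCle : IsCoboundedUnder (· ≤ ·) atTop x := hBge.isCoboundedUnder_le
    have hCge : IsCoboundedUnder (· ≥ ·) atTop x := hBle.isCoboundedUnder_ge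
    set m := liminf x atTop with hm
    set S := limsup x atTop with hS
    have hmS : m ≤ S := liminf_le_limsup hBle hBge
    have hfreqm : ∀ ε > 0, ∃ᶠ k in atTop, |x k - m| < ε := by
      intro ε hε
      have he : ∀ᶠ k in atTop, m - ε < x k :=
        eventually_lt_of_lt_liminf (by linarith) hBge
      have hf : ∃ᶠ k in atTop, x k < m + ε :=
        frequently_lt_of_liminf_lt hCge (by linarith)
      refine (he.and_frequently hf).mono ?_
      rintro k ⟨hk1, hk2⟩
      rw [abs_lt]
      constructor <;> linarith
    have hfreqS : ∀ ε > 0, ∃ᶠ k in atTop, |x k - S| < ε := by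
      intro ε hε
      have he : ∀ᶠ k in atTop, x k < S + ε :=
        eventually_lt_of_limsup_lt (by linarith) hBle
      have hf : ∃ᶠ k in atTop, S - ε < x k :=
        frequently_lt_of_lt_limsup hCle (by linarith)
      refine (he.and_frequently hf).mono ?_
      rintro k ⟨hk1, hk2⟩
      rw [abs_lt]
      constructor <;> linarith
    -- bounds from cluster values
    have hclbd : ∀ z : ℝ, (∀ ε > 0, ∃ᶠ k in atTop, |x k - z| < ε) → m ≤ z ∧ z ≤ S := by
      intro z hz
      constructor
      · refine le_of_forall_pos_le_add fun ε hε => ?_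
        refine liminf_le_of_frequently_le ?_ hBge
        refine (hz ε hε).mono fun k hk => ?_
        rw [abs_lt] at hk
        linarith [hk.1]
      · have : ∀ ε > 0, z - ε ≤ S := by
          intro ε hε
          refine le_limsup_of_frequently_le ?_ hBle
          refine (hz ε hε).mono fun k hk => ?_
          rw [abs_lt] at hk
          linarith [hk.2]
        by_contra hcon
        push_neg at hcon
        have := this ((z - S) / 2) (by linarith)
        linarith
    have hSu : S ≤ θs := by
      by_contra hcon
      push_neg at hcon
      obtain ⟨q₁, hq₁I, hfq₁, hq₁cl⟩ := cluster_pred hφ hmemI hstep hfreqS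
      obtain ⟨hmq₁, hq₁S⟩ := hclbd q₁ hq₁cl
      rcases lt_trichotomy q₁ θs with h | h | h
      · obtain ⟨p₁, hp₁I, hfp₁, hp₁cl⟩ := cluster_pred hφ hmemI hstep hfreqm
        obtain ⟨hmp₁, hp₁S⟩ := hclbd p₁ hp₁cl
        rcases lt_trichotomy p₁ θs with h' | h' | h'
        · have := h1 p₁ ⟨hp₁I.1, h'⟩
          rw [hfp₁] at this
          linarith
        · rw [h', hfix] at hfp₁
          linarith
        · have := hkey q₁ ⟨hq₁I.1, h⟩ p₁ h'.le (by rw [hfq₁]; exact hp₁S)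
          rw [hfp₁] at this
          linarith
      · rw [h, hfix] at hfq₁
        linarith
      · have := h2 q₁ ⟨h, hq₁I.2⟩
        rw [hfq₁] at this
        linarith
    have hum : θs ≤ m := by
      by_contra hcon
      push_neg at hcon
      obtain ⟨p₁, hp₁I, hfp₁, hp₁cl⟩ := cluster_pred hφ hmemI hstep hfreqm
      obtain ⟨hmp₁, hp₁S⟩ := hclbd p₁ hp₁cl
      rcases lt_trichotomy p₁ θs with h' | h' | h'
      · have := h1 p₁ ⟨hp₁I.1, h'⟩
        rw [hfp₁] at this
        linarith
      · rw [h', hfix] at hfp₁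
        linarith
      · linarith
    have hmu : m = θs := le_antisymm (hmS.trans hSu) hum
    have hSs : S = θs := le_antisymm hSu (hum.trans hmS)
    exact tendsto_of_liminf_eq_limsup hmu hSs hBle hBge
end

section
/- Let φ : ℝ → ℝ be continuous and let θ* be an isolated fixed point of φ. Suppose: (i) there exists a neighborhood of θ* on which the function θ ↦ φ(θ) − θ is non-increasing (respectively, strictly decreasing); and (ii) there exists θ̄ < θ* such that φ²(θ) ≥ θ (respectively, φ²(θ) > θ) for all θ ∈ [θ̄, θ*). Then θ* is a Lyapunov stable (respectively, asymptotically stable) fixed point of the dynamics θ_{k+1} = φ(θ_k). -/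
open Filter

lemma stab_aux (φ : ℝ → ℝ) (hφ : Continuous φ) (θs : ℝ) (hfix : φ θs = θs)
    (εa : ℝ) (hεa : 0 < εa)
    (hanti : AntitoneOn (fun θ => φ θ - θ) (Set.Ioo (θs - εa) (θs + εa)))
    (θb : ℝ) (hθb : θb < θs) (hii : ∀ θ ∈ Set.Ico θb θs, θ ≤ φ^[2] θ) :
    ∀ ε > 0, ∃ δ > 0, ∀ θ₀ : ℝ, |θ₀ - θs| < δ → ∀ k : ℕ, |φ^[k] θ₀ - θs| < ε := by
  intro ε hε
  set ε₂ : ℝ := min ε (min εa (θs - θb)) / 2 with hε₂def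
  have hmin1 : min ε (min εa (θs - θb)) ≤ ε := min_le_left _ _
  have hmin2 : min ε (min εa (θs - θb)) ≤ εa := le_trans (min_le_right _ _) (min_le_left _ _)
  have hmin3 : min ε (min εa (θs - θb)) ≤ θs - θb := le_trans (min_le_right _ _) (min_le_right _ _)
  have hε₂ : 0 < ε₂ := by
    have : 0 < min ε (min εa (θs - θb)) := lt_min hε (lt_min hεa (by linarith))
    simp only [hε₂def]; linarith
  have hε₂ε : ε₂ < ε := by simp only [hε₂def]; linarith
  have hε₂a : ε₂ < εa := by simp only [hε₂def]; linarith
  have hε₂b : θb < θs - ε₂ := by simp only [hε₂def]; linarith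
  have hmem : ∀ z : ℝ, θs - ε₂ ≤ z → z ≤ θs + ε₂ → z ∈ Set.Ioo (θs - εa) (θs + εa) := by
    intro z h1 h2; constructor <;> linarith
  have hleft : ∀ z : ℝ, θs - ε₂ ≤ z → z ≤ θs → z ≤ φ z := by
    intro z h1 h2
    have := hanti (hmem z h1 (by linarith)) (hmem θs (by linarith) (by linarith)) h2
    simp only [hfix] at this; linarith
  have hright : ∀ z : ℝ, θs ≤ z → z ≤ θs + ε₂ → φ z ≤ z := by
    intro z h1 h2
    have := hanti (hmem θs (by linarith) (by linarith)) (hmem z (by linarith) h2) h1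
    simp only [hfix] at this; linarith
  -- continuity at θs, target ε₂
  obtain ⟨δ₁, hδ₁pos, hδ₁⟩ := Metric.continuous_iff.1 hφ θs ε₂ hε₂
  set r : ℝ := min (δ₁ / 2) (ε₂ / 2) with hrdef
  have hrpos : 0 < r := lt_min (by linarith) (by linarith)
  have hrδ₁ : r < δ₁ := lt_of_le_of_lt (min_le_left _ _) (by linarith)
  have hrε₂ : r < ε₂ := lt_of_le_of_lt (min_le_right _ _) (by linarith)
  have hover : ∀ z : ℝ, θs - r ≤ z → z ≤ θs → φ z < θs + ε₂ := by
    intro z h1 h2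
    have hd : dist z θs < δ₁ := by
      rw [Real.dist_eq, abs_lt]; constructor <;> linarith
    have := hδ₁ z hd
    rw [Real.dist_eq, hfix, abs_lt] at this
    linarith [this.2]
  -- max of φ on [θs - r, θs]
  obtain ⟨xm, hxm, hmax⟩ := isCompact_Icc.exists_isMaxOn
    (⟨θs, by constructor <;> linarith⟩ : (Set.Icc (θs - r) θs).Nonempty) hφ.continuousOn
  set C : ℝ := φ xm with hCdef
  have hmax' : ∀ y ∈ Set.Icc (θs - r) θs, φ y ≤ C := fun y hy => hmax hy
  have hθC : θs ≤ C := by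
    have := hmax' θs ⟨by linarith, le_refl _⟩
    rw [hfix] at this; exact this
  have hCε : C < θs + ε₂ := hover xm hxm.1 hxm.2
  -- invariance of T = [θs - r, C]
  have hT : ∀ z : ℝ, θs - r ≤ z → z ≤ C → (θs - r ≤ φ z ∧ φ z ≤ C) := by
    intro z h1 h2
    by_cases hz : z ≤ θs
    · exact ⟨le_trans h1 (hleft z (by linarith) hz), hmax' z ⟨h1, hz⟩⟩
    · push_neg at hz
      refine ⟨?_, le_trans (hright z hz.le (by linarith)) h2⟩
      have hsub := intermediate_value_Icc' hxm.2 hφ.continuousOn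
      have hzmem : z ∈ Set.Icc (φ θs) (φ xm) := ⟨by rw [hfix]; exact hz.le, h2⟩
      obtain ⟨u, ⟨huk, huθ⟩, hu2⟩ := hsub hzmem
      have hult : u < θs := by
        rcases lt_or_eq_of_le huθ with h | h
        · exact h
        · exfalso
          rw [h, hfix] at hu2
          rw [← hu2] at hz
          exact lt_irrefl _ hz
      have hxu : θs - r ≤ u := le_trans hxm.1 huk
      have hub : θb ≤ u := by linarith
      have hkey := hii u ⟨hub, hult⟩
      have hiter : φ^[2] u = φ (φ u) := by
        rw [Function.iterate_succ_apply', Function.iterate_one]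
      rw [hiter, hu2] at hkey
      linarith
  -- continuity at θs, target r
  obtain ⟨δ₂, hδ₂pos, hδ₂⟩ := Metric.continuous_iff.1 hφ θs r hrpos
  set δ : ℝ := min δ₂ r with hδdef
  have hδpos : 0 < δ := lt_min hδ₂pos hrpos
  have hδδ₂ : δ ≤ δ₂ := min_le_left _ _
  have hδr : δ ≤ r := min_le_right _ _
  -- orbit invariant
  set P : ℝ → Prop := fun z => (θs - r ≤ z ∧ z ≤ C) ∨ (θs < z ∧ z < θs + δ) with hPdef
  have hstep : ∀ z, P z → P (φ z) := by
    intro z hz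
    rcases hz with ⟨h1, h2⟩ | ⟨h1, h2⟩
    · exact Or.inl (hT z h1 h2)
    · by_cases hz2 : θs < φ z
      · exact Or.inr ⟨hz2, lt_of_le_of_lt (hright z h1.le (by linarith)) h2⟩
      · push_neg at hz2
        left
        have hd : dist z θs < δ₂ := by
          rw [Real.dist_eq, abs_lt]; constructor <;> linarith
        have := hδ₂ z hd
        rw [Real.dist_eq, hfix, abs_lt] at this
        exact ⟨by linarith [this.1], le_trans hz2 hθC⟩
  have hinit : ∀ θ₀ : ℝ, |θ₀ - θs| < δ → P θ₀ := by
    intro θ₀ h₀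
    rw [abs_lt] at h₀
    by_cases hz : θ₀ ≤ θs
    · exact Or.inl ⟨by linarith [h₀.1], le_trans hz hθC⟩
    · push_neg at hz
      exact Or.inr ⟨hz, by linarith [h₀.2]⟩
  have hbound : ∀ z, P z → |z - θs| < ε := by
    intro z hz
    rw [abs_lt]
    rcases hz with ⟨h1, h2⟩ | ⟨h1, h2⟩
    · constructor <;> linarith
    · constructor <;> linarith
  refine ⟨δ, hδpos, fun θ₀ h₀ k => hbound _ ?_⟩
  induction k with
  | zero => exact hinit θ₀ h₀
  | succ n ih =>
    rw [Function.iterate_succ_apply']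
    exact hstep _ ih


lemma conv_aux (φ : ℝ → ℝ) (hφ : Continuous φ) (θs : ℝ) (hfix : φ θs = θs)
    (εa : ℝ) (hεa : 0 < εa)
    (hanti : StrictAntiOn (fun θ => φ θ - θ) (Set.Ioo (θs - εa) (θs + εa)))
    (θb : ℝ) (hθb : θb < θs) (hii : ∀ θ ∈ Set.Ico θb θs, θ < φ^[2] θ) :
    ∃ δ > 0, ∀ θ₀ : ℝ, |θ₀ - θs| < δ →
      Tendsto (fun k : ℕ => φ^[k] θ₀) atTop (nhds θs) := by
  classical
  have hii2 : ∀ θ ∈ Set.Ico θb θs, θ < φ (φ θ) := by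
    intro θ hθ
    have := hii θ hθ
    rwa [Function.iterate_succ_apply', Function.iterate_one] at this
  have S := stab_aux φ hφ θs hfix εa hεa hanti.antitoneOn θb hθb (fun θ h => (hii θ h).le)
  set ε₃ : ℝ := min εa (θs - θb) / 2 with hε₃def
  have hm1 : min εa (θs - θb) ≤ εa := min_le_left _ _
  have hm2 : min εa (θs - θb) ≤ θs - θb := min_le_right _ _
  have hε₃ : 0 < ε₃ := by
    have : 0 < min εa (θs - θb) := lt_min hεa (by linarith)
    simp only [hε₃def]; linarith
  have hε₃a : ε₃ < εa := by simp only [hε₃def]; linarith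
  have hε₃b : θb ≤ θs - ε₃ := by simp only [hε₃def]; linarith
  obtain ⟨δ₃, hδ₃, hstay⟩ := S ε₃ hε₃
  refine ⟨δ₃, hδ₃, fun θ₀ h₀ => ?_⟩
  set x : ℕ → ℝ := fun k => φ^[k] θ₀ with hxdef
  have hxs : ∀ k, x (k + 1) = φ (x k) := by
    intro k
    simp only [hxdef]
    exact Function.iterate_succ_apply' φ k θ₀
  have hB : ∀ k, |x k - θs| < ε₃ := hstay θ₀ h₀
  have hBl : ∀ k, θs - ε₃ < x k := fun k => by have := (abs_lt.1 (hB k)).1; linarith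
  have hBr : ∀ k, x k < θs + ε₃ := fun k => by have := (abs_lt.1 (hB k)).2; linarith
  have hmem : ∀ z : ℝ, θs - ε₃ ≤ z → z ≤ θs + ε₃ → z ∈ Set.Ioo (θs - εa) (θs + εa) := by
    intro z h1 h2; constructor <;> linarith
  have hQ1 : ∀ u : ℝ, θs - ε₃ ≤ u → u < θs → u < φ u := by
    intro u h1 h2
    have := hanti (hmem u h1 (by linarith)) (hmem θs (by linarith) (by linarith)) h2
    simp only [hfix] at this; linarith
  have hQ2 : ∀ v : ℝ, θs < v → v ≤ θs + ε₃ → φ v < v := by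
    intro v h1 h2
    have := hanti (hmem θs (by linarith) (by linarith)) (hmem v (by linarith) h2) h1
    simp only [hfix] at this; linarith
  -- the orbit eventually enters any small neighborhood of θs
  have hENTER : ∀ η > 0, ∃ N, |x N - θs| < η := by
    intro η hη
    rcases lt_or_ge η ε₃ with hηε | hηε
    swap
    · exact ⟨0, lt_of_lt_of_le (hB 0) hηε⟩
    by_contra hcon
    push_neg at hcon
    have hside : ∀ k, x k ≤ θs - η ∨ θs + η ≤ x k := by
      intro k
      rcases le_abs.mp (hcon k) with h | h
      · right; linarith
      · left; rw [neg_sub] at h; linarith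
    -- compactness constants
    have hKlne : (Set.Icc (θs - ε₃) (θs - η)).Nonempty :=
      ⟨θs - η, by constructor <;> linarith⟩
    have hKrne : (Set.Icc (θs + η) (θs + ε₃)).Nonempty :=
      ⟨θs + η, by constructor <;> linarith⟩
    obtain ⟨u₁, hu₁, hmin₁⟩ := isCompact_Icc.exists_isMinOn hKlne
      ((hφ.sub continuous_id).continuousOn : ContinuousOn (fun u : ℝ => φ u - u) _)
    obtain ⟨v₁, hv₁, hmin₂⟩ := isCompact_Icc.exists_isMinOn hKrne
      ((continuous_id.sub hφ).continuousOn : ContinuousOn (fun v : ℝ => v - φ v) _)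
    obtain ⟨u₂, hu₂, hmin₃⟩ := isCompact_Icc.exists_isMinOn hKlne
      (((hφ.comp hφ).sub continuous_id).continuousOn : ContinuousOn (fun u : ℝ => φ (φ u) - u) _)
    have hclpos : 0 < φ u₁ - u₁ := by
      have := hQ1 u₁ hu₁.1 (by linarith [hu₁.2]); linarith
    have hcrpos : 0 < v₁ - φ v₁ := by
      have := hQ2 v₁ (by linarith [hv₁.1]) hv₁.2; linarith
    have hc₂pos : 0 < φ (φ u₂) - u₂ := by
      have := hii2 u₂ ⟨by linarith [hu₂.1], by linarith [hu₂.2]⟩; linarith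
    have hcl : ∀ u ∈ Set.Icc (θs - ε₃) (θs - η), u + (φ u₁ - u₁) ≤ φ u := by
      intro u hu
      have : φ u₁ - u₁ ≤ φ u - u := hmin₁ hu
      linarith
    have hcr : ∀ v ∈ Set.Icc (θs + η) (θs + ε₃), φ v ≤ v - (v₁ - φ v₁) := by
      intro v hv
      have : v₁ - φ v₁ ≤ v - φ v := hmin₂ hv
      linarith
    have hc₂ : ∀ u ∈ Set.Icc (θs - ε₃) (θs - η), u + (φ (φ u₂) - u₂) ≤ φ (φ u) := by
      intro u hu
      have : φ (φ u₂) - u₂ ≤ φ (φ u) - u := hmin₃ hu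
      linarith
    set cr : ℝ := v₁ - φ v₁ with hcrdef
    set c₀ : ℝ := min (φ u₁ - u₁) (φ (φ u₂) - u₂) with hc₀def
    have hc₀pos : 0 < c₀ := lt_min hclpos hc₂pos
    -- right-run exit lemma
    have hR : ∀ j, θs + η ≤ x j → ∃ m : ℕ, 1 ≤ m ∧ x (j + m) ≤ θs - η ∧
        θs + η ≤ x (j + (m - 1)) ∧ x (j + (m - 1)) ≤ x j := by
      intro j hj
      have hrun : ∀ i : ℕ, (∀ i' ≤ i, θs + η ≤ x (j + i')) →
          x (j + i) ≤ x j - i * cr := by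
        intro i
        induction i with
        | zero => intro _; simp
        | succ n ih =>
          intro h
          have h1 : x (j + n) ≤ x j - n * cr := ih (fun i' hi' => h i' (Nat.le_succ_of_le hi'))
          have h2 : x (j + n) ∈ Set.Icc (θs + η) (θs + ε₃) :=
            ⟨h n (Nat.le_succ _), (hBr (j + n)).le⟩
          have h4 := hcr _ h2
          have h3 : x (j + (n + 1)) = φ (x (j + n)) := by
            have e : j + (n + 1) = (j + n) + 1 := by omega
            rw [e, hxs]
          rw [← h3] at h4
          push_cast
          linarith
      have hex : ∃ i : ℕ, ¬ θs + η ≤ x (j + i) := by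
        by_contra h'
        push_neg at h'
        obtain ⟨n, hn⟩ := exists_nat_gt ((x j - (θs - η)) / cr)
        have h1 := hrun n (fun i' _ => h' i')
        have h2 := (div_lt_iff₀ hcrpos).mp hn
        have h3 := h' n
        linarith
      set m : ℕ := Nat.find hex with hmdef
      have hms := Nat.find_spec hex
      have hm1 : 1 ≤ m := by
        rcases Nat.eq_zero_or_pos m with h | h
        · exfalso
          rw [hmdef] at h
          have := Nat.find_spec hex
          rw [h] at this
          simp only [Nat.add_zero] at this
          exact this hj
        · exact h
      have hprev : ∀ i, i < m → θs + η ≤ x (j + i) := by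
        intro i hi
        exact not_not.mp (Nat.find_min hex hi)
      have hexit : x (j + m) ≤ θs - η := by
        rcases hside (j + m) with h | h
        · exact h
        · exact absurd h hms
      have hm1' : m - 1 < m := Nat.sub_lt hm1 one_pos
      have hpr : θs + η ≤ x (j + (m - 1)) := hprev _ hm1'
      have hple : x (j + (m - 1)) ≤ x j := by
        have := hrun (m - 1) (fun i' hi' => hprev i' (lt_of_le_of_lt hi' hm1'))
        have hn0 : (0 : ℝ) ≤ (m - 1 : ℕ) := Nat.cast_nonneg _
        nlinarith
      exact ⟨m, hm1, hexit, hpr, hple⟩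
    -- left progress lemma
    have hA : ∀ k, x k ≤ θs - η → ∃ k', k < k' ∧ x k' ≤ θs - η ∧ x k + c₀ ≤ x k' := by
      intro k hk
      have hkK : x k ∈ Set.Icc (θs - ε₃) (θs - η) := ⟨(hBl k).le, hk⟩
      rcases hside (k + 1) with hL | hRt
      · refine ⟨k + 1, Nat.lt_succ_self k, hL, ?_⟩
        have h1 := hcl _ hkK
        rw [← hxs k] at h1
        have h2 : c₀ ≤ φ u₁ - u₁ := min_le_left _ _
        linarith
      · obtain ⟨m, hm1, hexit, hprev, hprevle⟩ := hR (k + 1) hRt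
        refine ⟨k + 1 + m, by omega, hexit, ?_⟩
        have hstep : x (k + 1 + m) = φ (x (k + 1 + (m - 1))) := by
          have e : k + 1 + m = (k + 1 + (m - 1)) + 1 := by omega
          rw [e, hxs]
        have hxkθ : x k ≤ θs := by linarith
        have hsub := intermediate_value_Icc' hxkθ hφ.continuousOn
        have hpmem : x (k + 1 + (m - 1)) ∈ Set.Icc (φ θs) (φ (x k)) := by
          constructor
          · rw [hfix]; linarith
          · rw [← hxs k]; exact hprevle
        obtain ⟨u, ⟨huk, huθ⟩, hup⟩ := hsub hpmem
        have hult : u < θs := by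
          rcases lt_or_eq_of_le huθ with h | h
          · exact h
          · exfalso
            rw [h, hfix] at hup
            linarith [hup ▸ hprev]
        by_cases hcase : u ≤ θs - η
        · have huK : u ∈ Set.Icc (θs - ε₃) (θs - η) := ⟨le_trans (hBl k).le huk, hcase⟩
          have h2 := hc₂ u huK
          rw [hup] at h2
          rw [hstep]
          have h3 : c₀ ≤ φ (φ u₂) - u₂ := min_le_right _ _
          linarith
        · push_neg at hcase
          exfalso
          have hub : θb ≤ u := le_trans hε₃b (le_trans (hBl k).le huk)
          have h2 := hii2 u ⟨hub, hult⟩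
          rw [hup] at h2
          rw [hstep] at hexit
          linarith
    -- initial left point
    have hinit : ∃ k₀, x k₀ ≤ θs - η := by
      rcases hside 0 with h | h
      · exact ⟨0, h⟩
      · obtain ⟨m, _, hexit, _, _⟩ := hR 0 h
        exact ⟨0 + m, hexit⟩
    obtain ⟨k₀, hk₀⟩ := hinit
    have hchain : ∀ n : ℕ, ∃ k, x k ≤ θs - η ∧ x k₀ + n * c₀ ≤ x k := by
      intro n
      induction n with
      | zero => exact ⟨k₀, hk₀, by simp⟩
      | succ n ih =>
        obtain ⟨k, hk, hge⟩ := ih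
        obtain ⟨k', _, hk', hge'⟩ := hA k hk
        refine ⟨k', hk', ?_⟩
        push_cast
        push_cast at hge
        linarith
    obtain ⟨n, hn⟩ := exists_nat_gt ((θs - η - x k₀) / c₀)
    obtain ⟨k, hk, hge⟩ := hchain n
    have h2 := (div_lt_iff₀ hc₀pos).mp hn
    linarith
  -- conclude convergence
  rw [Metric.tendsto_atTop]
  intro η hη
  obtain ⟨δη, hδηpos, hδηstay⟩ := S η hη
  obtain ⟨N, hN⟩ := hENTER δη hδηpos
  refine ⟨N, fun k hk => ?_⟩
  have hsplit : φ^[k] θ₀ = φ^[k - N] (φ^[N] θ₀) := by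
    rw [← Function.iterate_add_apply]
    congr 1
    omega
  show dist (φ^[k] θ₀) θs < η
  rw [Real.dist_eq, hsplit]
  exact hδηstay (φ^[N] θ₀) hN (k - N)


/-- Let `θ*` be an isolated fixed point of a continuous map `φ : ℝ → ℝ`.
If `φ(θ) − θ` is non-increasing (resp. strictly decreasing) on a neighborhood of `θ*` and
there is `θ̄ < θ*` with `φ²(θ) ≥ θ` (resp. `φ²(θ) > θ`) on `[θ̄, θ*)`, then `θ*` is
Lyapunov stable (resp. asymptotically stable). -/
theorem stable_fixed_point_criterion (φ : ℝ → ℝ) (hφ : Continuous φ)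
    (θs : ℝ) (hfix : φ θs = θs)
    (hiso : ∃ ε > 0, ∀ θ ∈ Set.Ioo (θs - ε) (θs + ε), φ θ = θ → θ = θs) :
    (((∃ ε > 0, AntitoneOn (fun θ => φ θ - θ) (Set.Ioo (θs - ε) (θs + ε))) ∧
      (∃ θb < θs, ∀ θ ∈ Set.Ico θb θs, θ ≤ φ^[2] θ)) →
      ∀ ε > 0, ∃ δ > 0, ∀ θ₀ : ℝ, |θ₀ - θs| < δ → ∀ k : ℕ, |φ^[k] θ₀ - θs| < ε) ∧
    (((∃ ε > 0, StrictAntiOn (fun θ => φ θ - θ) (Set.Ioo (θs - ε) (θs + ε))) ∧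
      (∃ θb < θs, ∀ θ ∈ Set.Ico θb θs, θ < φ^[2] θ)) →
      ((∀ ε > 0, ∃ δ > 0, ∀ θ₀ : ℝ, |θ₀ - θs| < δ → ∀ k : ℕ, |φ^[k] θ₀ - θs| < ε) ∧
       (∃ δ > 0, ∀ θ₀ : ℝ, |θ₀ - θs| < δ →
         Tendsto (fun k : ℕ => φ^[k] θ₀) atTop (nhds θs)))) := by
  constructor
  · rintro ⟨⟨εa, hεa, hanti⟩, ⟨θb, hθb, hii⟩⟩ ε hε
    exact stab_aux φ hφ θs hfix εa hεa hanti θb hθb hii ε hε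
  · rintro ⟨⟨εa, hεa, hanti⟩, ⟨θb, hθb, hii⟩⟩
    refine ⟨stab_aux φ hφ θs hfix εa hεa hanti.antitoneOn θb hθb
      (fun θ h => (hii θ h).le), ?_⟩
    exact conv_aux φ hφ θs hfix εa hεa hanti θb hθb hii
end

section
/- Let σ ∈ (0, 1), α := (1+σ)⁻¹, let A, A_c ∈ ℝ^{2×2} with A and A_c invertible, and let S ∈ ℝ^{2×2} be invertible with J := S⁻¹AS. Define G(τ) := I + A⁻¹(e^{Aτ} − I)A_c, L(τ) := G(τ) − αI, R := S⁻¹(I − (1−α) A A_c⁻¹) S, and σ_m(τ) := e^{λτ}·√((τ² + 2 − τ√(τ² + 4))/2). Suppose there exist τ > 0 and x ≠ 0 with L(τ)x = 0. Then: (i) if J = diag(λ₁, λ₂) with λ₁, λ₂ > 0, or J = [[μ, −ω], [ω, μ]] with μ > 0, or J = [[λ, 1], [0, λ]] with λ ≥ 1/2, then ‖R‖ > 1; (ii) if J = [[λ, 1], [0, λ]] with λ ∈ (0, 1/2), then ‖R‖ ≥ σ_m(√(1/λ² − 4)). -/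
open Matrix

/-! ### Auxiliary analytic lemmas -/

lemma aux_hd (t : ℝ) : HasDerivAt (fun t : ℝ => t * Real.cosh t - Real.sinh t)
    (1 * Real.cosh t + t * Real.sinh t - Real.cosh t) t := by
  exact ((hasDerivAt_id' t).mul (Real.hasDerivAt_cosh t)).sub (Real.hasDerivAt_sinh t)

lemma sinh_le_mul_cosh {y : ℝ} (hy : 0 ≤ y) : Real.sinh y ≤ y * Real.cosh y := by
  have hm : MonotoneOn (fun t : ℝ => t * Real.cosh t - Real.sinh t) (Set.Ici 0) := by
    apply monotoneOn_of_deriv_nonneg (convex_Ici 0)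
    · exact ((continuous_id.mul Real.continuous_cosh).sub Real.continuous_sinh).continuousOn
    · intro t _
      exact (aux_hd t).differentiableAt.differentiableWithinAt
    · intro t ht
      rw [interior_Ici, Set.mem_Ioi] at ht
      rw [(aux_hd t).deriv]
      have : 0 ≤ Real.sinh t := Real.sinh_nonneg_iff.2 ht.le
      nlinarith
  have h0 := hm (Set.self_mem_Ici) (Set.mem_Ici.2 hy) hy
  simpa using h0

lemma exp_sub_exp_neg_ge {x : ℝ} (hx : 0 ≤ x) : 2 * x ≤ Real.exp x - Real.exp (-x) := by
  have h := Real.self_le_sinh_iff.2 hx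
  rw [Real.sinh_eq] at h
  linarith

lemma exp_sub_exp_neg_gt {x : ℝ} (hx : 0 < x) : 2 * x < Real.exp x - Real.exp (-x) := by
  have h := Real.self_lt_sinh_iff.2 hx
  rw [Real.sinh_eq] at h
  linarith

lemma psi_nonneg {b x : ℝ} (hb0 : 0 < b) (hb1 : b < 1) (hx : -b < x) :
    0 ≤ (1+b)*(Real.exp x - 1 - x) - (1-b)*(Real.exp (-x) - 1 + x) := by
  have hux : 0 ≤ Real.exp x - 1 - x := by linarith [Real.add_one_le_exp x]
  have hux' : 0 ≤ Real.exp (-x) - 1 + x := by linarith [Real.add_one_le_exp (-x)]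
  rcases le_or_gt 0 x with h | h
  · have hd : 0 ≤ (Real.exp x - 1 - x) - (Real.exp (-x) - 1 + x) := by
      have := exp_sub_exp_neg_ge h; linarith
    nlinarith [mul_nonneg hb0.le (add_nonneg hux hux')]
  · set y := -x with hy
    have hy0 : 0 < y := by simp [hy]; linarith
    have hyb : y < b := by simp [hy]; linarith
    have hkey : 0 ≤ (1+y)*(Real.exp (-y) - 1 + y) - (1-y)*(Real.exp y - 1 - y) := by
      have h2 := sinh_le_mul_cosh hy0.le
      rw [Real.sinh_eq, Real.cosh_eq] at h2
      nlinarith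
    have huy : 0 ≤ Real.exp (-y) - 1 + y := by linarith [Real.add_one_le_exp (-y)]
    have huy' : 0 ≤ Real.exp y - 1 - y := by linarith [Real.add_one_le_exp y]
    have hxy : x = -y := by simp [hy]
    have hgoal : 0 ≤ (1+b)*(Real.exp (-y) - 1 + y) - (1-b)*(Real.exp y - 1 - y) := by
      nlinarith [mul_nonneg (sub_nonneg.2 hyb.le) huy, mul_nonneg (sub_nonneg.2 hyb.le) huy']
    rw [hxy]
    linarith [hgoal]

lemma core_ineq {a b : ℝ} (ha : 0 < a) (hb0 : 0 < b) (hb1 : b < 1) :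
    Real.exp b * (1 - b) ≤ Real.exp a * (Real.sqrt (a^2 + 1 - b^2) - a) := by
  set c := Real.sqrt (a^2 + 1 - b^2) with hc
  have harg : 0 ≤ a^2 + 1 - b^2 := by nlinarith
  have hc0 : 0 ≤ c := Real.sqrt_nonneg _
  have hc2 : c^2 = a^2 + 1 - b^2 := Real.sq_sqrt harg
  set X := Real.exp (a - b) with hX
  have hX0 : 0 < X := Real.exp_pos _
  have hXY : X * Real.exp (b - a) = 1 := by
    rw [hX, ← Real.exp_add]; norm_num
  have hEa : Real.exp a = X * Real.exp b := by
    rw [hX, ← Real.exp_add]; norm_num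
  have hψ := psi_nonneg hb0 hb1 (show -b < a - b by linarith)
  rw [show -(a-b) = b - a by ring] at hψ
  have hφ : 0 ≤ X^2*(1+b) - 2*a*X - (1-b) := by
    have h1 := mul_nonneg hX0.le hψ
    nlinarith [hXY]
  have hD0 : 0 < X*(1+b) - a := by nlinarith
  have hcD : c ≤ X*(1+b) - a := by nlinarith [sq_nonneg (X*(1+b) - a - c)]
  have hca : 0 < c + a := by linarith
  have hb' : 0 < 1 - b := by linarith
  have h1 : Real.exp b * (c + a) ≤ Real.exp a * (1 + b) := by
    calc Real.exp b * (c + a) ≤ Real.exp b * (X*(1+b)) := by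
          apply mul_le_mul_of_nonneg_left _ (Real.exp_pos b).le
          linarith
      _ = Real.exp a * (1+b) := by rw [hEa]; ring
  nlinarith [mul_le_mul_of_nonneg_left h1 hb'.le, Real.exp_pos a, Real.exp_pos b]

/-- `σ_m(λ, τ) = e^{λτ}√((τ² + 2 − τ√(τ² + 4))/2)`, the minimum singular value of
`e^{Jτ}` for a non-diagonalizable Jordan block `J` with eigenvalue `λ`. -/
noncomputable def sigmaM (lam τ : ℝ) : ℝ :=
  Real.exp (lam * τ) * Real.sqrt ((τ ^ 2 + 2 - τ * Real.sqrt (τ ^ 2 + 4)) / 2)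

lemma sigmaM_eq (lam : ℝ) {τ : ℝ} (hτ : 0 ≤ τ) :
    sigmaM lam τ = Real.exp (lam*τ) * ((Real.sqrt (τ^2+4) - τ)/2) := by
  unfold sigmaM
  congr 1
  have h4 : (0:ℝ) ≤ τ^2+4 := by positivity
  have hsq : Real.sqrt (τ^2+4) ^2 = τ^2+4 := Real.sq_sqrt h4
  have hge : τ ≤ Real.sqrt (τ^2+4) := by nlinarith [Real.sqrt_nonneg (τ^2+4)]
  have heq : (τ^2+2-τ*Real.sqrt (τ^2+4))/2 = ((Real.sqrt (τ^2+4) - τ)/2)^2 := by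
    linear_combination (-1/4) * hsq
  rw [heq, Real.sqrt_sq (by linarith)]

lemma one_lt_sigmaM {lam τ : ℝ} (hl : 1/2 ≤ lam) (hτ : 0 < τ) : 1 < sigmaM lam τ := by
  rw [sigmaM_eq lam hτ.le]
  set s := Real.sqrt (τ^2+4) with hs
  have h4 : (0:ℝ) ≤ τ^2+4 := by positivity
  have hsq : s^2 = τ^2+4 := Real.sq_sqrt h4
  have hs0 : 0 ≤ s := Real.sqrt_nonneg _
  have hst : τ < s := by nlinarith
  have hv : τ < Real.exp (τ/2) - Real.exp (-(τ/2)) := by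
    have := exp_sub_exp_neg_gt (show 0 < τ/2 by linarith)
    linarith
  have hvv : Real.exp (τ/2) * Real.exp (-(τ/2)) = 1 := by
    rw [← Real.exp_add]; norm_num
  have hv0 : 0 < Real.exp (τ/2) := Real.exp_pos _
  have hquad : 0 < Real.exp (τ/2)^2 - τ * Real.exp (τ/2) - 1 := by
    nlinarith [mul_pos hv0 (sub_pos.2 hv)]
  have hD : s + τ < 2 * Real.exp (τ/2) := by
    nlinarith [sq_nonneg (2*Real.exp (τ/2) - τ - s)]
  have hexp : Real.exp (τ/2) ≤ Real.exp (lam * τ) := by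
    apply Real.exp_le_exp.2; nlinarith
  nlinarith [mul_pos hv0 (sub_pos.2 hst)]

lemma sigmaM_min {lam τ : ℝ} (hl0 : 0 < lam) (hl : lam < 1/2) (hτ : 0 < τ) :
    sigmaM lam (Real.sqrt (1/lam^2 - 4)) ≤ sigmaM lam τ := by
  have harg : 0 ≤ 1/lam^2 - 4 := by
    rw [sub_nonneg, le_div_iff₀ (by positivity)]; nlinarith
  set τs := Real.sqrt (1/lam^2 - 4) with hτs
  have hτs0 : 0 ≤ τs := Real.sqrt_nonneg _
  have hτs2 : τs^2 = 1/lam^2 - 4 := Real.sq_sqrt harg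
  rw [sigmaM_eq lam hτs0, sigmaM_eq lam hτ.le]
  set a := lam * τ with ha
  set b := lam * τs with hb
  have ha0 : 0 < a := mul_pos hl0 hτ
  have hb2 : b^2 = 1 - 4*lam^2 := by
    rw [hb, mul_pow, hτs2]; field_simp
  have hb0 : 0 < b := by
    rcases (mul_nonneg hl0.le hτs0).lt_or_eq with h | h
    · exact h
    · exfalso
      have hb0' : b = 0 := by rw [hb, ← h]
      rw [hb0'] at hb2; nlinarith
  have hb1 : b < 1 := by nlinarith
  have hcore := core_ineq ha0 hb0 hb1
  have hsqeq : Real.sqrt (a^2 + 1 - b^2) = lam * Real.sqrt (τ^2+4) := by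
    have : a^2 + 1 - b^2 = lam^2 * (τ^2+4) := by rw [ha]; nlinarith
    rw [this, Real.sqrt_mul (by positivity), Real.sqrt_sq hl0.le]
  rw [hsqeq] at hcore
  have h1l : Real.sqrt (τs^2+4) = 1/lam := by
    have : τs^2+4 = (1/lam)^2 := by rw [hτs2]; field_simp; ring
    rw [this, Real.sqrt_sq (by positivity)]
  rw [h1l]
  have e1 : (1:ℝ) - b = lam * (1/lam - τs) := by rw [hb]; field_simp
  have e2 : lam * Real.sqrt (τ^2+4) - a = lam * (Real.sqrt (τ^2+4) - τ) := by rw [ha]; ring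
  rw [e1, e2, mul_left_comm (Real.exp b), mul_left_comm (Real.exp a)] at hcore
  have h3 := le_of_mul_le_mul_left hcore hl0
  linarith

/-! ### Auxiliary matrix lemmas -/

lemma exp_sq_zero (N : Matrix (Fin 2) (Fin 2) ℝ) (h : N * N = 0) :
    NormedSpace.exp N = 1 + N := by
  rw [NormedSpace.exp_eq_tsum ℝ]
  simp only []
  show (∑' n : ℕ, ((n.factorial : ℝ))⁻¹ • N ^ n) = 1 + N
  have hpow : ∀ n : ℕ, 2 ≤ n → N ^ n = 0 := by
    intro n hn
    obtain ⟨k, rfl⟩ := Nat.exists_eq_add_of_le hn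
    rw [pow_add, pow_two, h, zero_mul]
  rw [tsum_eq_sum (s := Finset.range 2)
    (fun n hn => by rw [hpow n (by simp at hn; omega), smul_zero])]
  simp [Finset.sum_range_succ]

lemma exp_smul_one (c : ℝ) :
    NormedSpace.exp (c • (1 : Matrix (Fin 2) (Fin 2) ℝ)) = Real.exp c • 1 := by
  rw [Matrix.smul_one_eq_diagonal, Matrix.exp_diagonal, Pi.exp_def]
  rw [show (fun _ : Fin 2 => NormedSpace.exp c) = (fun _ : Fin 2 => Real.exp c) by
    funext i; rw [Real.exp_eq_exp_ℝ]]
  rw [← Matrix.smul_one_eq_diagonal]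

lemma exp_jordan (lam τ : ℝ) :
    NormedSpace.exp (τ • !![lam, 1; (0:ℝ), lam]) = Real.exp (lam * τ) • !![1, τ; 0, 1] := by
  have hsplit : τ • !![lam, 1; (0:ℝ), lam] =
      (lam * τ) • (1 : Matrix (Fin 2) (Fin 2) ℝ) + !![0, τ; 0, 0] := by
    ext i j; fin_cases i <;> fin_cases j <;> simp [Matrix.one_apply] <;> ring
  have hcomm : Commute ((lam * τ) • (1 : Matrix (Fin 2) (Fin 2) ℝ)) !![0, τ; 0, 0] :=
    (Commute.one_left _).smul_left _
  have hN : !![0, τ; (0:ℝ), 0] * !![0, τ; 0, 0] = 0 := by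
    ext i j; fin_cases i <;> fin_cases j <;> simp [Matrix.mul_apply, Fin.sum_univ_two]
  rw [hsplit, Matrix.exp_add_of_commute _ _ hcomm, exp_smul_one, exp_sq_zero _ hN,
    smul_mul_assoc, one_mul]
  congr 1
  ext i j; fin_cases i <;> fin_cases j <;> simp [Matrix.one_apply]

lemma rot_key (μ ω τ : ℝ) :
    (NormedSpace.exp (τ • !![μ, -ω; ω, μ]))ᵀ * NormedSpace.exp (τ • !![μ, -ω; ω, μ]) =
      Real.exp (2 * (τ * μ)) • 1 := by
  set M := τ • !![μ, -ω; ω, μ] with hM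
  have hT : Mᵀ = τ • !![μ, ω; -ω, μ] := by
    ext i j; fin_cases i <;> fin_cases j <;> simp [hM]
  have hcomm : Commute Mᵀ M := by
    unfold Commute SemiconjBy
    rw [hT, hM]
    ext i j; fin_cases i <;> fin_cases j <;>
      simp [Matrix.mul_apply, Fin.sum_univ_two] <;> ring
  have hsum : Mᵀ + M = (2 * (τ * μ)) • (1 : Matrix (Fin 2) (Fin 2) ℝ) := by
    rw [hT, hM]
    ext i j; fin_cases i <;> fin_cases j <;> simp [Matrix.one_apply] <;> ring
  rw [← Matrix.exp_transpose, ← Matrix.exp_add_of_commute _ _ hcomm, hsum, exp_smul_one]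

lemma norm_sq_mulVec (E : Matrix (Fin 2) (Fin 2) ℝ) (e : ℝ) (hE : Eᵀ * E = e • 1)
    (z : Fin 2 → ℝ) :
    (E.mulVec z 0)^2 + (E.mulVec z 1)^2 = e * (z 0^2 + z 1^2) := by
  have h1 : (E.mulVec z) ⬝ᵥ (E.mulVec z) = e * (z ⬝ᵥ z) := by
    rw [Matrix.dotProduct_mulVec]
    rw [← Matrix.transpose_transpose E, Matrix.vecMul_transpose, Matrix.transpose_transpose,
      Matrix.mulVec_mulVec, hE, Matrix.smul_mulVec, Matrix.one_mulVec,
      smul_dotProduct, smul_eq_mul]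
  simpa [dotProduct, Fin.sum_univ_two, sq] using h1

lemma euclid_norm_symm (w : Fin 2 → ℝ) :
    ‖(WithLp.equiv 2 (Fin 2 → ℝ)).symm w‖ = Real.sqrt (w 0^2 + w 1^2) := by
  rw [EuclideanSpace.norm_eq]
  simp [Fin.sum_univ_two, sq_abs, Real.norm_eq_abs]

lemma ne_zero_cases {z : Fin 2 → ℝ} (hz : z ≠ 0) : z 0 ≠ 0 ∨ z 1 ≠ 0 := by
  by_contra hcon
  push_neg at hcon
  exact hz (by ext i; fin_cases i <;> simp [hcon.1, hcon.2])

lemma sum_sq_pos {z : Fin 2 → ℝ} (hz : z ≠ 0) : 0 < z 0^2 + z 1^2 := by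
  rcases ne_zero_cases hz with h | h
  · have := sq_nonneg (z 1); positivity
  · have := sq_nonneg (z 0); positivity

lemma norm_clm_ge (R : Matrix (Fin 2) (Fin 2) ℝ) (z : Fin 2 → ℝ) (hz : z ≠ 0) {c : ℝ}
    (hc : 0 ≤ c) (h : c^2 * (z 0^2 + z 1^2) ≤ (R.mulVec z 0)^2 + (R.mulVec z 1)^2) :
    c ≤ ‖Matrix.toEuclideanCLM (𝕜 := ℝ) R‖ := by
  set v : EuclideanSpace ℝ (Fin 2) := (WithLp.equiv 2 (Fin 2 → ℝ)).symm z with hv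
  have happ : Matrix.toEuclideanCLM (𝕜 := ℝ) R v
      = (WithLp.equiv 2 (Fin 2 → ℝ)).symm (R.mulVec z) := by
    rfl
  have hle := (Matrix.toEuclideanCLM (𝕜 := ℝ) R).le_opNorm v
  rw [happ, euclid_norm_symm, euclid_norm_symm] at hle
  have hzpos := sum_sq_pos hz
  have h2 : c * Real.sqrt (z 0^2 + z 1^2) ≤ Real.sqrt ((R.mulVec z 0)^2 + (R.mulVec z 1)^2) := by
    have := Real.sqrt_le_sqrt h
    rwa [Real.sqrt_mul (sq_nonneg c), Real.sqrt_sq hc] at this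
  have hvpos : 0 < Real.sqrt (z 0^2 + z 1^2) := Real.sqrt_pos.2 hzpos
  have := h2.trans hle
  exact le_of_mul_le_mul_right (by linarith) hvpos

lemma norm_clm_gt (R : Matrix (Fin 2) (Fin 2) ℝ) (z : Fin 2 → ℝ) (hz : z ≠ 0)
    (h : z 0^2 + z 1^2 < (R.mulVec z 0)^2 + (R.mulVec z 1)^2) :
    1 < ‖Matrix.toEuclideanCLM (𝕜 := ℝ) R‖ := by
  set v : EuclideanSpace ℝ (Fin 2) := (WithLp.equiv 2 (Fin 2 → ℝ)).symm z with hv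
  have happ : Matrix.toEuclideanCLM (𝕜 := ℝ) R v
      = (WithLp.equiv 2 (Fin 2 → ℝ)).symm (R.mulVec z) := by
    rfl
  have hle := (Matrix.toEuclideanCLM (𝕜 := ℝ) R).le_opNorm v
  rw [happ, euclid_norm_symm, euclid_norm_symm] at hle
  have hzpos := sum_sq_pos hz
  have h2 : Real.sqrt (z 0^2 + z 1^2) < Real.sqrt ((R.mulVec z 0)^2 + (R.mulVec z 1)^2) :=
    Real.sqrt_lt_sqrt (by positivity) h
  have hvpos : 0 < Real.sqrt (z 0^2 + z 1^2) := Real.sqrt_pos.2 hzpos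
  nlinarith [h2.trans_le hle]

lemma mulVec_ne_zero {B : Matrix (Fin 2) (Fin 2) ℝ} (hB : IsUnit B.det) {v : Fin 2 → ℝ}
    (hv : v ≠ 0) : B.mulVec v ≠ 0 := by
  intro h0
  apply hv
  have := congrArg (B⁻¹.mulVec) h0
  rwa [Matrix.mulVec_mulVec, Matrix.nonsing_inv_mul _ hB, Matrix.one_mulVec,
    Matrix.mulVec_zero] at this

lemma extraction (σ : ℝ) (A Ac S J R : Matrix (Fin 2) (Fin 2) ℝ)
    (hA : IsUnit A.det) (hAc : IsUnit Ac.det) (hS : IsUnit S.det)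
    (hJ : J = S⁻¹ * A * S)
    (hR : R = S⁻¹ * (1 - (1 - (1 + σ)⁻¹) • (A * Ac⁻¹)) * S)
    (G : ℝ → Matrix (Fin 2) (Fin 2) ℝ)
    (hG : ∀ τ : ℝ, G τ = 1 + A⁻¹ * (NormedSpace.exp (τ • A) - 1) * Ac)
    {τ : ℝ} {x : Fin 2 → ℝ} (hx : x ≠ 0)
    (hfix : (G τ - (1 + σ)⁻¹ • (1 : Matrix (Fin 2) (Fin 2) ℝ)).mulVec x = 0) :
    ∃ z : Fin 2 → ℝ, z ≠ 0 ∧ R.mulVec z = (NormedSpace.exp (τ • J)).mulVec z := by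
  set α : ℝ := (1 + σ)⁻¹ with hα
  set E := NormedSpace.exp (τ • A) with hE
  set W : Matrix (Fin 2) (Fin 2) ℝ := 1 - (1 - α) • (A * Ac⁻¹) with hW
  have h1 : A * A⁻¹ = 1 := Matrix.mul_nonsing_inv A hA
  have h2 : Ac * Ac⁻¹ = 1 := Matrix.mul_nonsing_inv Ac hAc
  have h2' : Ac⁻¹ * Ac = 1 := Matrix.nonsing_inv_mul Ac hAc
  have h3 : S * S⁻¹ = 1 := Matrix.mul_nonsing_inv S hS
  have h3' : S⁻¹ * S = 1 := Matrix.nonsing_inv_mul S hS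
  have key : A * (G τ - α • 1) * Ac⁻¹ = E - W := by
    rw [hG τ]
    have e1 : A * (1 + A⁻¹ * (E - 1) * Ac - α • (1 : Matrix (Fin 2) (Fin 2) ℝ)) * Ac⁻¹
        = (A * A⁻¹) * ((E - 1) * (Ac * Ac⁻¹)) + A * Ac⁻¹ - α • (A * Ac⁻¹) := by
      rw [Matrix.mul_sub, Matrix.mul_add, Matrix.mul_one, Matrix.sub_mul, Matrix.add_mul,
        mul_smul_comm, Matrix.mul_one, smul_mul_assoc]
      rw [show A * (A⁻¹ * (E - 1) * Ac) = A * A⁻¹ * (E - 1) * Ac by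
        rw [← mul_assoc, ← mul_assoc]]
      rw [show A * A⁻¹ * (E - 1) * Ac * Ac⁻¹ = (A * A⁻¹) * ((E - 1) * (Ac * Ac⁻¹)) by
        rw [← mul_assoc, ← mul_assoc]]
      abel
    rw [e1, h1, h2, one_mul, mul_one, hW, sub_smul, one_smul]
    abel
  have hM : (E - W).mulVec (Ac.mulVec x) = 0 := by
    rw [← key, Matrix.mulVec_mulVec]
    rw [show A * (G τ - α • 1) * Ac⁻¹ * Ac = A * (G τ - α • 1) by
      rw [mul_assoc, h2', mul_one]]
    rw [← Matrix.mulVec_mulVec, hfix, Matrix.mulVec_zero]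
  have hSRS : S * R * S⁻¹ = W := by
    rw [hR]
    rw [show S * (S⁻¹ * (1 - (1 - α) • (A * Ac⁻¹)) * S) * S⁻¹
        = (S * S⁻¹) * (1 - (1 - α) • (A * Ac⁻¹)) * (S * S⁻¹) by noncomm_ring]
    rw [h3, one_mul, mul_one, hW]
  set y := Ac.mulVec x with hy
  have hy0 : y ≠ 0 := mulVec_ne_zero hAc hx
  have hEy : E.mulVec y = (S * R * S⁻¹).mulVec y := by
    rw [hSRS]
    rw [Matrix.sub_mulVec] at hM
    exact sub_eq_zero.mp hM
  set z := S⁻¹.mulVec y with hz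
  have hz0 : z ≠ 0 := mulVec_ne_zero (Matrix.isUnit_nonsing_inv_det S hS) hy0
  refine ⟨z, hz0, ?_⟩
  have hexpJ : NormedSpace.exp (τ • J) = S⁻¹ * E * S := by
    rw [hJ, show τ • (S⁻¹ * A * S) = S⁻¹ * (τ • A) * S by
      rw [← smul_mul_assoc, ← mul_smul_comm]]
    exact Matrix.exp_conj' S (τ • A) ((Matrix.isUnit_iff_isUnit_det S).2 hS)
  have hrhs : (S⁻¹ * E * S) *ᵥ z = (R * S⁻¹) *ᵥ y := by
    rw [hz, Matrix.mulVec_mulVec]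
    rw [show S⁻¹ * E * S * S⁻¹ = S⁻¹ * E by rw [mul_assoc, h3, mul_one]]
    rw [← Matrix.mulVec_mulVec, hEy, Matrix.mulVec_mulVec]
    rw [show S⁻¹ * (S * R * S⁻¹) = R * S⁻¹ by rw [← mul_assoc, ← mul_assoc, h3', one_mul]]
  have hlhs : R *ᵥ z = (R * S⁻¹) *ᵥ y := by rw [hz, Matrix.mulVec_mulVec]
  rw [hexpJ, hrhs, hlhs]

lemma real_exp_eq (x : ℝ) : NormedSpace.exp x = Real.exp x :=
  (congrFun Real.exp_eq_exp_ℝ x).symm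

lemma exp_diag (τ l1 l2 : ℝ) :
    NormedSpace.exp (τ • Matrix.diagonal ![l1, l2]) =
      Matrix.diagonal ![Real.exp (τ*l1), Real.exp (τ*l2)] := by
  rw [show τ • Matrix.diagonal ![l1,l2] = Matrix.diagonal ![τ*l1, τ*l2] by
    rw [← Matrix.diagonal_smul]; congr 1; funext i; fin_cases i <;> simp]
  rw [Matrix.exp_diagonal]
  have hfun : (NormedSpace.exp (![τ*l1, τ*l2] : Fin 2 → ℝ))
      = ![Real.exp (τ*l1), Real.exp (τ*l2)] := by
    rw [Pi.exp_def]; funext i; fin_cases i <;> simp [real_exp_eq]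
  rw [hfun]

lemma quad_bound {τ : ℝ} (hτ : 0 < τ) (w0 w1 : ℝ) :
    ((Real.sqrt (τ^2+4) - τ)/2)^2 * (w0^2 + w1^2) ≤ (w0 + τ*w1)^2 + w1^2 := by
  set c := Real.sqrt (τ^2+4) with hc
  have hc0 : 0 ≤ c := Real.sqrt_nonneg _
  have hsq : c^2 = τ^2+4 := Real.sq_sqrt (by positivity)
  set s := ((c-τ)/2)^2 with hs
  have hs2 : s^2 - (τ^2+2)*s + 1 = 0 := by
    rw [hs]; linear_combination ((c-τ)^2/16 - τ*(c-τ)/8 - 1/4) * hsq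
  have hs1 : s < 1 := by rw [hs]; nlinarith
  have hkey : (1-s)*((w0+τ*w1)^2 + w1^2 - s*(w0^2+w1^2))
      = ((1-s)*w0+τ*w1)^2 + (s^2-(τ^2+2)*s+1)*w1^2 := by ring
  rw [hs2] at hkey
  nlinarith [sq_nonneg ((1-s)*w0+τ*w1)]

lemma jordan_mulVec (e τ : ℝ) (z : Fin 2 → ℝ) :
    (e • !![(1:ℝ), τ; 0, 1]) *ᵥ z = ![e*(z 0 + τ*z 1), e*z 1] := by
  funext i
  fin_cases i <;> simp [Matrix.mulVec, dotProduct, Fin.sum_univ_two] <;> ring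

/-- Algebraic necessary condition for the "angle" map to have a fixed
point under the relative-threshold triggering rule: if `L(τ)x = 0` for some `τ > 0`,
`x ≠ 0`, then `‖R‖ > 1` when the real Jordan form `J = S⁻¹AS` is diagonal with positive
entries, a rotation-scaling with positive real part, or a Jordan block with eigenvalue
`λ ≥ 1/2`; and `‖R‖ ≥ σ_m(√(1/λ² − 4))` when `J` is a Jordan block with `λ ∈ (0, 1/2)`.
Here `‖·‖` is the operator norm induced by the Euclidean norm. -/
theorem necessary_condition_fixed_point (σ : ℝ) (hσ : σ ∈ Set.Ioo (0 : ℝ) 1)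
    (A Ac S J R : Matrix (Fin 2) (Fin 2) ℝ)
    (hA : IsUnit A.det) (hAc : IsUnit Ac.det) (hS : IsUnit S.det)
    (hJ : J = S⁻¹ * A * S)
    (hR : R = S⁻¹ * (1 - (1 - (1 + σ)⁻¹) • (A * Ac⁻¹)) * S)
    (G : ℝ → Matrix (Fin 2) (Fin 2) ℝ)
    (hG : ∀ τ : ℝ, G τ = 1 + A⁻¹ * (NormedSpace.exp (τ • A) - 1) * Ac)
    (hfix : ∃ τ : ℝ, 0 < τ ∧ ∃ x : Fin 2 → ℝ, x ≠ 0 ∧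
      (G τ - (1 + σ)⁻¹ • (1 : Matrix (Fin 2) (Fin 2) ℝ)).mulVec x = 0) :
    (((∃ l1 l2 : ℝ, 0 < l1 ∧ 0 < l2 ∧ J = Matrix.diagonal ![l1, l2]) ∨
      (∃ μ ω : ℝ, 0 < μ ∧ J = !![μ, -ω; ω, μ]) ∨
      (∃ lam : ℝ, 1 / 2 ≤ lam ∧ J = !![lam, 1; 0, lam])) →
      1 < ‖Matrix.toEuclideanCLM (𝕜 := ℝ) R‖) ∧
    (∀ lam : ℝ, lam ∈ Set.Ioo (0 : ℝ) (1 / 2) → J = !![lam, 1; 0, lam] →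
      sigmaM lam (Real.sqrt (1 / lam ^ 2 - 4)) ≤ ‖Matrix.toEuclideanCLM (𝕜 := ℝ) R‖) := by
  obtain ⟨τ, hτ, x, hx, hLx⟩ := hfix
  obtain ⟨z, hz0, hzeq⟩ := extraction σ A Ac S J R hA hAc hS hJ hR G hG hx hLx
  have hz2 := sum_sq_pos hz0
  constructor
  · rintro (⟨l1, l2, hl1, hl2, hJd⟩ | ⟨μ, ω, hμ, hJr⟩ | ⟨lam, hlam, hJj⟩)
    · -- diagonal case
      rw [hJd, exp_diag] at hzeq
      apply norm_clm_gt R z hz0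
      rw [hzeq]
      simp only [Matrix.mulVec_diagonal, Matrix.cons_val_zero, Matrix.cons_val_one,
        Matrix.head_cons]
      have he1 : 1 < Real.exp (τ*l1) := Real.one_lt_exp_iff.2 (mul_pos hτ hl1)
      have he2 : 1 < Real.exp (τ*l2) := Real.one_lt_exp_iff.2 (mul_pos hτ hl2)
      have he1sq : 1 < Real.exp (τ*l1)^2 := by nlinarith
      have he2sq : 1 < Real.exp (τ*l2)^2 := by nlinarith
      rcases ne_zero_cases hz0 with h | h
      · have hzp : 0 < z 0^2 := by positivity
        nlinarith [mul_lt_mul_of_pos_right he1sq hzp,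
          mul_le_mul_of_nonneg_right he2sq.le (sq_nonneg (z 1))]
      · have hzp : 0 < z 1^2 := by positivity
        nlinarith [mul_lt_mul_of_pos_right he2sq hzp,
          mul_le_mul_of_nonneg_right he1sq.le (sq_nonneg (z 0))]
    · -- rotation case
      rw [hJr] at hzeq
      apply norm_clm_gt R z hz0
      rw [hzeq, norm_sq_mulVec _ _ (rot_key μ ω τ) z]
      have he : 1 < Real.exp (2*(τ*μ)) := Real.one_lt_exp_iff.2 (by positivity)
      nlinarith
    · -- Jordan case, lam ≥ 1/2
      rw [hJj, exp_jordan, jordan_mulVec] at hzeq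
      apply norm_clm_gt R z hz0
      rw [hzeq]
      simp only [Matrix.cons_val_zero, Matrix.cons_val_one, Matrix.head_cons]
      have hq := quad_bound hτ (z 0) (z 1)
      have hsig := one_lt_sigmaM hlam hτ
      rw [sigmaM_eq lam hτ.le] at hsig
      have hE0 : (0:ℝ) < Real.exp (lam*τ) := Real.exp_pos _
      have h1 := mul_le_mul_of_nonneg_left hq (sq_nonneg (Real.exp (lam*τ)))
      have h2 : 1 < (Real.exp (lam*τ) * ((Real.sqrt (τ^2+4) - τ)/2))^2 := by nlinarith
      have hml : lam * τ = τ * lam := by ring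
      nlinarith [h1, h2, hz2]
  · intro lam hlam hJj
    rw [hJj, exp_jordan, jordan_mulVec] at hzeq
    have hq := quad_bound hτ (z 0) (z 1)
    have hc0 : 0 ≤ sigmaM lam (Real.sqrt (1 / lam ^ 2 - 4)) := by
      unfold sigmaM; positivity
    apply norm_clm_ge R z hz0 hc0
    rw [hzeq]
    simp only [Matrix.cons_val_zero, Matrix.cons_val_one, Matrix.head_cons]
    have hmin := sigmaM_min hlam.1 hlam.2 hτ
    have hsig0 : 0 ≤ sigmaM lam τ := by unfold sigmaM; positivity
    have hsigeq := sigmaM_eq lam hτ.le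
    have h1 : sigmaM lam (Real.sqrt (1 / lam ^ 2 - 4))^2 ≤ (sigmaM lam τ)^2 := by
      nlinarith
    rw [hsigeq] at h1
    have h2 := mul_le_mul_of_nonneg_right h1 hz2.le
    have h3 := mul_le_mul_of_nonneg_left hq (sq_nonneg (Real.exp (lam*τ)))
    nlinarith [h2, h3]
end

section
/- Let α ∈ (0, 1), let S ∈ ℝ^{2×2} be invertible, and suppose J := S⁻¹AS satisfies either J = diag(λ₁, λ₂) with λ₁, λ₂ > 0, or J = [[μ, −ω], [ω, μ]] with μ > 0 (i.e., A is diagonalizable over ℂ with both eigenvalues of positive real part). Let A_c ∈ ℝ^{2×2} be invertible and have a real eigenvalue λ_c < 0 with eigenvector x ≠ 0. Then ‖R‖ > 1, where R := S⁻¹(I − (1−α) A A_c⁻¹) S. -/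
open Matrix

/-- If `A` is diagonalizable over `ℂ` with both eigenvalues of
positive real part (real Jordan form `J = S⁻¹AS` either diagonal with positive entries
or a rotation-scaling with positive real part `μ`), `α ∈ (0, 1)`, and `A_c` is
invertible with a real eigenvalue `λ_c < 0`, then `‖R‖ > 1`, where
`R = S⁻¹(I − (1−α) A A_c⁻¹) S` and `‖·‖` is the Euclidean operator norm. -/
theorem necessary_condition_always_satisfied (α : ℝ) (hα : α ∈ Set.Ioo (0 : ℝ) 1)
    (A Ac S : Matrix (Fin 2) (Fin 2) ℝ) (hS : IsUnit S.det) (hAc : IsUnit Ac.det)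
    (hJ : (∃ l1 l2 : ℝ, 0 < l1 ∧ 0 < l2 ∧ S⁻¹ * A * S = Matrix.diagonal ![l1, l2]) ∨
          (∃ μ ω : ℝ, 0 < μ ∧ S⁻¹ * A * S = !![μ, -ω; ω, μ]))
    (lc : ℝ) (hlc : lc < 0) (x : Fin 2 → ℝ) (hx : x ≠ 0)
    (heig : Ac.mulVec x = lc • x) :
    1 < ‖Matrix.toEuclideanCLM (𝕜 := ℝ) (n := Fin 2) (S⁻¹ * (1 - (1 - α) • (A * Ac⁻¹)) * S)‖ := by
  obtain ⟨hα0, hα1⟩ := hα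
  set M : Matrix (Fin 2) (Fin 2) ℝ := S⁻¹ * (1 - (1 - α) • (A * Ac⁻¹)) * S with hM
  set J : Matrix (Fin 2) (Fin 2) ℝ := S⁻¹ * A * S with hJdef
  have hS1 : S⁻¹ * S = 1 := nonsing_inv_mul S hS
  have hS2 : S * S⁻¹ = 1 := mul_nonsing_inv S hS
  have hAc1 : Ac⁻¹ * Ac = 1 := nonsing_inv_mul Ac hAc
  have hlc0 : lc ≠ 0 := ne_of_lt hlc
  set w : Fin 2 → ℝ := S⁻¹.mulVec x with hw
  set c : ℝ := (1 - α) * lc⁻¹ with hc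
  have hlcinv : lc⁻¹ < 0 := inv_lt_zero.mpr hlc
  have hcneg : c < 0 := mul_neg_of_pos_of_neg (by linarith) hlcinv
  -- Ac⁻¹ x = lc⁻¹ x
  have hinv : Ac⁻¹.mulVec x = lc⁻¹ • x := by
    have h1 : Ac⁻¹.mulVec (Ac.mulVec x) = x := by
      rw [mulVec_mulVec, hAc1, one_mulVec]
    rw [heig, mulVec_smul] at h1
    have h2 := congrArg (fun v => lc⁻¹ • v) h1
    simp only [smul_smul, inv_mul_cancel₀ hlc0, one_smul] at h2
    exact h2
  -- key identity: M w = w - c • J w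
  have hJw' : J.mulVec w = S⁻¹.mulVec (A.mulVec x) := by
    rw [hw, mulVec_mulVec, hJdef, Matrix.mul_assoc (S⁻¹ * A) S S⁻¹, hS2, Matrix.mul_one,
      ← mulVec_mulVec]
  have key : M.mulVec w = w - c • J.mulVec w := by
    have hMS : M * S⁻¹ = S⁻¹ * (1 - (1 - α) • (A * Ac⁻¹)) := by
      rw [hM, Matrix.mul_assoc, Matrix.mul_assoc, hS2, Matrix.mul_one]
    have h1 : M.mulVec w = (S⁻¹ * (1 - (1 - α) • (A * Ac⁻¹))).mulVec x := by
      rw [hw, mulVec_mulVec, hMS]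
    rw [h1]
    have h2 : (1 - (1 - α) • (A * Ac⁻¹)).mulVec x = x - ((1 - α) * lc⁻¹) • A.mulVec x := by
      rw [sub_mulVec, one_mulVec, smul_mulVec]
      congr 1
      rw [← mulVec_mulVec, hinv, mulVec_smul, smul_smul]
    rw [← mulVec_mulVec, h2, Matrix.mulVec_sub, Matrix.mulVec_smul, hJw', hc, hw]
  -- w ≠ 0
  have hwne : w ≠ 0 := by
    intro h
    apply hx
    have hback : S.mulVec w = x := by
      rw [hw, mulVec_mulVec, hS2, one_mulVec]
    rw [h, mulVec_zero] at hback
    exact hback.symm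
  clear_value M J w c
  clear hM hJdef hw hc hJw' hinv hS1 hS2 hAc1 heig hx hS hAc A Ac S x
  have h0 : w 0 ≠ 0 ∨ w 1 ≠ 0 := by
    by_contra h
    push_neg at h
    apply hwne
    funext i
    fin_cases i <;> simp [h.1, h.2]
  have hwsq : 0 < w 0 ^ 2 + w 1 ^ 2 := by
    rcases h0 with h | h
    · have : 0 < w 0 ^ 2 := by positivity
      nlinarith [sq_nonneg (w 1)]
    · have : 0 < w 1 ^ 2 := by positivity
      nlinarith [sq_nonneg (w 0)]
  -- the strict growth of the squared norm
  have grow : w 0 ^ 2 + w 1 ^ 2 < (M.mulVec w 0) ^ 2 + (M.mulVec w 1) ^ 2 := by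
    rcases hJ with ⟨l1, l2, hl1, hl2, hJeq⟩ | ⟨μ, ω, hμ, hJeq⟩
    · have hJw0 : J.mulVec w 0 = l1 * w 0 := by
        rw [hJeq]; simp [Matrix.mulVec_diagonal]
      have hJw1 : J.mulVec w 1 = l2 * w 1 := by
        rw [hJeq]; simp [Matrix.mulVec_diagonal]
      have e0 : M.mulVec w 0 = (1 - c * l1) * w 0 := by
        rw [key, Pi.sub_apply, Pi.smul_apply, smul_eq_mul, hJw0]; ring
      have e1 : M.mulVec w 1 = (1 - c * l2) * w 1 := by
        rw [key, Pi.sub_apply, Pi.smul_apply, smul_eq_mul, hJw1]; ring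
      rw [e0, e1]
      have h1 : 1 < (1 - c * l1) ^ 2 := by
        nlinarith [mul_pos (neg_pos.mpr hcneg) hl1, sq_nonneg (c * l1)]
      have h2 : 1 < (1 - c * l2) ^ 2 := by
        nlinarith [mul_pos (neg_pos.mpr hcneg) hl2, sq_nonneg (c * l2)]
      have hexp : ((1 - c * l1) * w 0) ^ 2 + ((1 - c * l2) * w 1) ^ 2
          = (1 - c * l1) ^ 2 * w 0 ^ 2 + (1 - c * l2) ^ 2 * w 1 ^ 2 := by ring
      rw [hexp]
      rcases h0 with h | h
      · have hp : 0 < w 0 ^ 2 := by positivity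
        nlinarith [mul_pos (sub_pos.mpr h1) hp,
          mul_nonneg (by linarith : (0:ℝ) ≤ (1 - c * l2) ^ 2 - 1) (sq_nonneg (w 1))]
      · have hp : 0 < w 1 ^ 2 := by positivity
        nlinarith [mul_pos (sub_pos.mpr h2) hp,
          mul_nonneg (by linarith : (0:ℝ) ≤ (1 - c * l1) ^ 2 - 1) (sq_nonneg (w 0))]
    · have hJw0 : J.mulVec w 0 = μ * w 0 + (-ω) * w 1 := by
        rw [hJeq]
        simp [Matrix.mulVec, dotProduct, Fin.sum_univ_two, Matrix.vecHead, Matrix.vecTail]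
      have hJw1 : J.mulVec w 1 = ω * w 0 + μ * w 1 := by
        rw [hJeq]
        simp [Matrix.mulVec, dotProduct, Fin.sum_univ_two, Matrix.vecHead, Matrix.vecTail]
      have e0 : M.mulVec w 0 = (1 - c * μ) * w 0 + c * ω * w 1 := by
        rw [key, Pi.sub_apply, Pi.smul_apply, smul_eq_mul, hJw0]; ring
      have e1 : M.mulVec w 1 = -(c * ω) * w 0 + (1 - c * μ) * w 1 := by
        rw [key, Pi.sub_apply, Pi.smul_apply, smul_eq_mul, hJw1]; ring
      rw [e0, e1]
      have h1 : 1 < (1 - c * μ) ^ 2 := by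
        nlinarith [mul_pos (neg_pos.mpr hcneg) hμ, sq_nonneg (c * μ)]
      have hfact : ((1 - c * μ) * w 0 + c * ω * w 1) ^ 2 + (-(c * ω) * w 0 + (1 - c * μ) * w 1) ^ 2
          = ((1 - c * μ) ^ 2 + (c * ω) ^ 2) * (w 0 ^ 2 + w 1 ^ 2) := by ring
      rw [hfact]
      have hk : 1 < (1 - c * μ) ^ 2 + (c * ω) ^ 2 := by nlinarith [sq_nonneg (c * ω)]
      nlinarith [mul_pos (sub_pos.mpr hk) hwsq]
  -- transfer to EuclideanSpace
  set T := Matrix.toEuclideanCLM (𝕜 := ℝ) (n := Fin 2) M with hT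
  set v : EuclideanSpace ℝ (Fin 2) := (WithLp.equiv 2 (Fin 2 → ℝ)).symm w with hv
  have hTv : T v = (WithLp.equiv 2 (Fin 2 → ℝ)).symm (M.mulVec w) :=
    Matrix.toEuclideanCLM_toLp M w
  have hnv : ‖v‖ = Real.sqrt (w 0 ^ 2 + w 1 ^ 2) := by
    rw [EuclideanSpace.norm_eq]
    congr 1
    simp [Fin.sum_univ_two, hv, sq_abs]
  have hnTv : ‖T v‖ = Real.sqrt ((M.mulVec w 0) ^ 2 + (M.mulVec w 1) ^ 2) := by
    rw [hTv, EuclideanSpace.norm_eq]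
    congr 1
    simp [Fin.sum_univ_two, sq_abs]
  have hlt : ‖v‖ < ‖T v‖ := by
    rw [hnv, hnTv]
    exact Real.sqrt_lt_sqrt (by positivity) grow
  have hvpos : 0 < ‖v‖ := by
    rw [hnv]
    exact Real.sqrt_pos.mpr hwsq
  have hle : ‖T v‖ ≤ ‖T‖ * ‖v‖ := T.le_opNorm v
  have hfin : 1 * ‖v‖ < ‖T‖ * ‖v‖ := by
    rw [one_mul]
    exact lt_of_lt_of_le hlt hle
  exact lt_of_mul_lt_mul_right hfin (le_of_lt hvpos)
end
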